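/- arXiv:2201.02186 — 7 statements merged into one kernel-verified Lean document; each statement's English description precedes it below -/
import Mathlib

section
/- Let f be a strongly nondegenerate self-concordant function on an open convex domain D_f contained in the positive orthant of R^n. Then for all x in D_f, the Hessian satisfies H(x) ≽ (1/n) Diag(1/x_1^2, …, 1/x_n^2) in the Loewner order, i.e., z^T H(x) z ≥ (1/n) Σ_i (z_i/x_i)^2 for all z ∈ R^n. -/
/-- Local quadratic form `v ↦ vᵀ H v` induced by a Hessian matrix `H`. -/
noncomputable def quadForm {n : ℕ} (H : Matrix (Fin n) (Fin n) ℝ) (v : Fin n → ℝ) : ℝ :=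
  dotProduct v (H.mulVec v)



lemma quadForm_smul {n : ℕ} (H : Matrix (Fin n) (Fin n) ℝ) (c : ℝ) (v : Fin n → ℝ) :
    quadForm H (c • v) = c ^ 2 * quadForm H v := by
  simp [quadForm, Matrix.mulVec_smul, dotProduct_smul, smul_dotProduct,
    smul_eq_mul]
  ring

lemma quadForm_nonneg {n : ℕ} {H : Matrix (Fin n) (Fin n) ℝ} (h : H.PosDef)
    (v : Fin n → ℝ) : 0 ≤ quadForm H v := by
  have := h.posSemidef.dotProduct_mulVec_nonneg v
  simpa [quadForm] using this

lemma quadForm_pos {n : ℕ} {H : Matrix (Fin n) (Fin n) ℝ} (h : H.PosDef)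
    {v : Fin n → ℝ} (hv : v ≠ 0) : 0 < quadForm H v := by
  have := h.dotProduct_mulVec_pos hv
  simpa [quadForm] using this


theorem stmt1_aux (n : ℕ) (D : Set (Fin n → ℝ)) (H : (Fin n → ℝ) → Matrix (Fin n) (Fin n) ℝ)
    (hDpos : ∀ x ∈ D, ∀ i, 0 < x i)
    (hposdef : ∀ x ∈ D, (H x).PosDef)
    (hsc1 : ∀ x ∈ D, ∀ y : Fin n → ℝ, quadForm (H x) (y - x) < 1 → y ∈ D) :
    ∀ x ∈ D, ∀ z : Fin n → ℝ,
      (1 / (n : ℝ)) * ∑ i, (z i / x i) ^ 2 ≤ quadForm (H x) z := by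
  intro x hx z
  set q := quadForm (H x) z with hqdef
  have hq0 : 0 ≤ q := quadForm_nonneg (hposdef x hx) z
  have key : ∀ i, (z i) ^ 2 ≤ q * (x i) ^ 2 := by
    intro i
    by_cases hzi : z i = 0
    · simp [hzi]
      positivity
    · have hqpos : 0 < q := by
        apply quadForm_pos (hposdef x hx)
        intro h0
        exact hzi (by simp [h0])
      have hxi : 0 < x i := hDpos x hx i
      set s := Real.sqrt q with hsdef
      have hs : 0 < s := Real.sqrt_pos.mpr hqpos
      have hs2 : s ^ 2 = q := Real.sq_sqrt hq0
      have hzia : 0 < |z i| := abs_pos.mpr hzi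
      have claim : ∀ ε : ℝ, 0 < ε → ε < 1 → (1 - ε) * |z i| < x i * s := by
        intro ε hε hε1
        set lam : ℝ := -((1 - ε) * z i / (s * |z i|)) with hlam
        have hlz : lam * z i = -((1 - ε) * |z i| / s) := by
          rw [hlam]
          have : z i * z i = |z i| * |z i| := by
            rw [← abs_mul_abs_self]
          field_simp
          linear_combination (ε - 1) * this
        have hmem : x + lam • z ∈ D := by
          apply hsc1 x hx
          have h1 : (x + lam • z) - x = lam • z := by abel
          rw [h1, quadForm_smul]
          have hlam2 : lam ^ 2 * q = (1 - ε) ^ 2 := by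
            rw [hlam]
            have h2 : z i ^ 2 = |z i| ^ 2 := (sq_abs _).symm
            field_simp
            linear_combination ((1 - ε) ^ 2 * q) * h2 - ((1 - ε) ^ 2 * |z i| ^ 2) * hs2
          rw [← hqdef, hlam2]
          nlinarith
        have hp := hDpos _ hmem i
        have hp' : 0 < x i + lam * z i := by simpa using hp
        rw [hlz] at hp'
        have : (1 - ε) * |z i| / s < x i := by linarith
        calc (1 - ε) * |z i| = ((1 - ε) * |z i| / s) * s := by field_simp
          _ < x i * s := by
              apply mul_lt_mul_of_pos_right this hs
      by_contra hcon
      push_neg at hcon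
      have habs : x i * s < |z i| := by
        have h1 : (x i * s) ^ 2 < z i ^ 2 := by nlinarith
        have : x i * s < |z i| := by
          nlinarith [sq_abs (z i), mul_pos hxi hs, hzia]
        exact this
      set ε : ℝ := 1 - (x i * s + |z i|) / (2 * |z i|) with hεdef
      have hε : 0 < ε := by
        rw [hεdef]
        have : (x i * s + |z i|) / (2 * |z i|) < 1 := by
          rw [div_lt_one (by positivity)]
          linarith
        linarith
      have hε1 : ε < 1 := by
        rw [hεdef]
        have : 0 < (x i * s + |z i|) / (2 * |z i|) := by positivity
        linarith
      have := claim ε hε hε1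
      have h1e : (1 - ε) = (x i * s + |z i|) / (2 * |z i|) := by rw [hεdef]; ring
      rw [h1e] at this
      have : x i * s + |z i| < 2 * (x i * s) := by
        have h2 : ((x i * s + |z i|) / (2 * |z i|)) * |z i| = (x i * s + |z i|) / 2 := by
          field_simp
        rw [h2] at this
        linarith
      linarith
  have hsum : ∑ i, (z i / x i) ^ 2 ≤ (n : ℝ) * q := by
    calc ∑ i, (z i / x i) ^ 2 ≤ ∑ _i : Fin n, q := by
          apply Finset.sum_le_sum
          intro i _
          have hxi : 0 < x i := hDpos x hx i
          rw [div_pow, div_le_iff₀ (by positivity)]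
          linarith [key i]
      _ = (n : ℝ) * q := by simp [mul_comm]
  rcases Nat.eq_zero_or_pos n with hn | hn
  · subst hn
    simp
    exact hq0
  · have hn' : (0 : ℝ) < n := by exact_mod_cast hn
    rw [one_div, inv_mul_le_iff₀ hn']
    linarith


/-- Hessian lower bound `H(x) ≽ (1/n) Diag(1/x²)` for a self-concordant
function with domain in the positive orthant. -/
theorem stmt1 (n : ℕ) (D : Set (Fin n → ℝ)) (f : (Fin n → ℝ) → ℝ)
    (H : (Fin n → ℝ) → Matrix (Fin n) (Fin n) ℝ)
    (hopen : IsOpen D) (hconv : Convex ℝ D)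
    (hDpos : ∀ x ∈ D, ∀ i, 0 < x i)
    (hf : ContDiffOn ℝ 2 f D)
    (hposdef : ∀ x ∈ D, (H x).PosDef)
    (hsc1 : ∀ x ∈ D, ∀ y : Fin n → ℝ, quadForm (H x) (y - x) < 1 → y ∈ D)
    (hsc2 : ∀ x ∈ D, ∀ y : Fin n → ℝ, quadForm (H x) (y - x) < 1 →
      ∀ v : Fin n → ℝ, v ≠ 0 →
        1 - Real.sqrt (quadForm (H x) (y - x)) ≤
            Real.sqrt (quadForm (H y) v) / Real.sqrt (quadForm (H x) v) ∧
        Real.sqrt (quadForm (H y) v) / Real.sqrt (quadForm (H x) v) ≤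
            1 / (1 - Real.sqrt (quadForm (H x) (y - x)))) :
    ∀ x ∈ D, ∀ z : Fin n → ℝ,
      (1 / (n : ℝ)) * ∑ i, (z i / x i) ^ 2 ≤ quadForm (H x) z := by
  exact stmt1_aux n D H hDpos hposdef hsc1
end

section
/- Let (K_t)_{t>1} be a family of subsets of R_{≥0}^n and K ⊆ T^n (T = R ∪ {−∞}) such that the Hausdorff distance d_∞(log_t K_t, K) tends to 0 as t → ∞, where log_t is applied entrywise with log_t 0 = −∞. Then K is tropically convex: for all u, v ∈ K and all λ, μ ∈ T with max(λ, μ) = 0, the point max(u + λ·1, v + μ·1) (entrywise maximum, with scalar added to every coordinate) belongs to K, provided K is closed. -/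
open scoped BigOperators

/-- Entrywise base-`t` logarithm with the convention `log_t 0 = −∞`, valued in
`T = ℝ ∪ {−∞}` modelled inside `EReal`. -/
noncomputable def logt (t : ℝ) (a : ℝ) : EReal :=
  if a = 0 then ⊥ else ((Real.logb t a : ℝ) : EReal)

lemma logt_zero (t : ℝ) : logt t 0 = ⊥ := if_pos rfl

lemma logt_pos_eq {t a : ℝ} (ha : 0 < a) : logt t a = ((Real.logb t a : ℝ) : EReal) :=
  if_neg (ne_of_gt ha)

lemma logt_mono {t : ℝ} (ht : 1 < t) {p q : ℝ} (hp : 0 ≤ p) (h : p ≤ q) :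
    logt t p ≤ logt t q := by
  rcases eq_or_lt_of_le hp with h0 | h0
  · rw [← h0, logt_zero]; exact bot_le
  · have hq : 0 < q := lt_of_lt_of_le h0 h
    rw [logt_pos_eq h0, logt_pos_eq hq]
    exact_mod_cast Real.logb_le_logb_of_le ht h0 h

lemma logt_two_mul {t : ℝ} (ht : 1 < t) {q : ℝ} (hq : 0 < q) :
    logt t (2 * q) = ((Real.logb t 2 : ℝ) : EReal) + logt t q := by
  rw [logt_pos_eq (by positivity), logt_pos_eq hq, ← EReal.coe_add,
    Real.logb_mul (by norm_num) (ne_of_gt hq)]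

lemma ne_top_of_le_zero' {lam : EReal} (hlam : lam ≤ 0) : lam ≠ ⊤ := by
  intro hh; rw [hh] at hlam; exact absurd hlam (by simp)

lemma logt_weight {t : ℝ} (ht : 1 < t) {lam : EReal} (hlam : lam ≤ 0) {c : ℝ} (hc : 0 ≤ c) :
    logt t ((if lam = ⊥ then 0 else t ^ lam.toReal) * c) = lam + logt t c := by
  rcases eq_or_ne lam ⊥ with rfl | hb
  · simp [logt_zero, EReal.bot_add]
  · have htop : lam ≠ ⊤ := ne_top_of_le_zero' hlam
    rw [if_neg hb]
    have ht0 : (0:ℝ) < t := by linarith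
    have hpow : 0 < t ^ lam.toReal := Real.rpow_pos_of_pos ht0 _
    rcases eq_or_lt_of_le hc with h0 | h0
    · rw [← h0, mul_zero, logt_zero, EReal.add_bot]
    · rw [logt_pos_eq (by positivity), logt_pos_eq h0,
        Real.logb_mul (ne_of_gt hpow) (ne_of_gt h0),
        Real.logb_rpow ht0 (by linarith : t ≠ 1), EReal.coe_add,
        EReal.coe_toReal htop hb]

lemma logt_max {t : ℝ} (ht : 1 < t) {X Y : ℝ} (hX : 0 ≤ X) (hY : 0 ≤ Y) :
    logt t (max X Y) = max (logt t X) (logt t Y) := by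
  rcases le_total X Y with h | h
  · rw [max_eq_right h, max_eq_right (logt_mono ht hX h)]
  · rw [max_eq_left h, max_eq_left (logt_mono ht hY h)]

/-- if the sets `log_t K_t` (with each `K_t` convex in the nonnegative
orthant) converge in the `d_∞` Hausdorff sense to a closed set `K ⊆ T^n`, then `K` is
tropically convex. -/
theorem stmt6 (n : ℕ) (K : ℝ → Set (Fin n → ℝ)) (Kbar : Set (Fin n → EReal))
    (hKt : ∀ t : ℝ, 1 < t → K t ⊆ {x | ∀ i, 0 ≤ x i})
    (hKconv : ∀ t : ℝ, 1 < t → Convex ℝ (K t))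
    (hbar : ∀ u ∈ Kbar, ∀ i, u i ≠ ⊤)
    (hclosed : IsClosed Kbar)
    (hconv : ∀ ε : ℝ, 0 < ε → ∃ t₀ : ℝ, 1 < t₀ ∧ ∀ t : ℝ, t₀ ≤ t →
      (∀ x ∈ K t, ∃ u ∈ Kbar, ∀ i,
          logt t (x i) ≤ u i + (ε : EReal) ∧ u i ≤ logt t (x i) + (ε : EReal)) ∧
      (∀ u ∈ Kbar, ∃ x ∈ K t, ∀ i,
          logt t (x i) ≤ u i + (ε : EReal) ∧ u i ≤ logt t (x i) + (ε : EReal))) :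
    ∀ u ∈ Kbar, ∀ v ∈ Kbar, ∀ lam mu : EReal, max lam mu = 0 →
      (fun i => max (u i + lam) (v i + mu)) ∈ Kbar := by
  intro u hu v hv lam mu hmax
  set w : Fin n → EReal := fun i => max (u i + lam) (v i + mu) with hwdef
  have hlam : lam ≤ 0 := hmax ▸ le_max_left _ _
  have hmu : mu ≤ 0 := hmax ▸ le_max_right _ _
  have hlamt : lam ≠ ⊤ := ne_top_of_le_zero' hlam
  have hmut : mu ≠ ⊤ := ne_top_of_le_zero' hmu
  -- key approximation claim
  have key : ∀ ε : ℝ, 0 < ε →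
      ∃ p ∈ Kbar, ∀ i, p i ≤ w i + (ε : EReal) ∧ w i ≤ p i + (ε : EReal) := by
    intro ε hε
    set ε' := ε / 3 with hε'def
    have hε' : 0 < ε' := by positivity
    obtain ⟨t₀, ht₀, hT⟩ := hconv ε' hε'
    set t := max t₀ (max 2 (Real.exp (Real.log 2 / ε'))) with htdef
    have ht1 : 1 < t := lt_of_lt_of_le ht₀ (le_max_left _ _)
    have ht0 : (0:ℝ) < t := by linarith
    have hlog2 : Real.logb t 2 ≤ ε' := by
      rw [Real.logb, div_le_iff₀ (Real.log_pos ht1)]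
      have h1 : Real.log 2 / ε' ≤ Real.log t := by
        calc Real.log 2 / ε' = Real.log (Real.exp (Real.log 2 / ε')) :=
              (Real.log_exp _).symm
          _ ≤ Real.log t := Real.log_le_log (Real.exp_pos _)
              (le_trans (le_max_right _ _) (le_max_right _ _))
      calc Real.log 2 = ε' * (Real.log 2 / ε') := by field_simp
        _ ≤ ε' * Real.log t := mul_le_mul_of_nonneg_left h1 hε'.le
    obtain ⟨happrox, hlift⟩ := hT t (le_max_left _ _)
    obtain ⟨x, hx, hxu⟩ := hlift u hu
    obtain ⟨y, hy, hyv⟩ := hlift v hv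
    have hxpos : ∀ i, 0 ≤ x i := hKt t ht1 hx
    have hypos : ∀ i, 0 ≤ y i := hKt t ht1 hy
    set a : ℝ := if lam = ⊥ then 0 else t ^ lam.toReal with hadef
    set b : ℝ := if mu = ⊥ then 0 else t ^ mu.toReal with hbdef
    have ha0 : 0 ≤ a := by
      rw [hadef]; split
      · exact le_refl 0
      · exact (Real.rpow_pos_of_pos ht0 _).le
    have hb0 : 0 ≤ b := by
      rw [hbdef]; split
      · exact le_refl 0
      · exact (Real.rpow_pos_of_pos ht0 _).le
    have hle1 : ∀ c : EReal, c ≤ 0 → (if c = ⊥ then (0:ℝ) else t ^ c.toReal) ≤ 1 := by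
      intro c hc
      split
      · norm_num
      · next hcb =>
        apply Real.rpow_le_one_of_one_le_of_nonpos ht1.le
        have h2 : ((c.toReal : ℝ) : EReal) ≤ (((0:ℝ) : ℝ) : EReal) := by
          rw [EReal.coe_toReal (ne_top_of_le_zero' hc) hcb]
          exact_mod_cast hc
        exact_mod_cast h2
    have ha1 : a ≤ 1 := hle1 lam hlam
    have hb1 : b ≤ 1 := hle1 mu hmu
    have hab1 : 1 ≤ a + b := by
      rcases le_total lam mu with h | h
      · have h0 : mu = 0 := by rw [← hmax, max_eq_right h]
        have : b = 1 := by
          rw [hbdef, h0, if_neg (by simp : (0:EReal) ≠ ⊥)]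
          simp [Real.rpow_zero]
        linarith
      · have h0 : lam = 0 := by rw [← hmax, max_eq_left h]
        have : a = 1 := by
          rw [hadef, h0, if_neg (by simp : (0:EReal) ≠ ⊥)]
          simp [Real.rpow_zero]
        linarith
    set s := a + b with hsdef
    have hs1 : 1 ≤ s := hab1
    have hs2 : s ≤ 2 := by linarith
    have hspos : 0 < s := by linarith
    have hz : (a/s) • x + (b/s) • y ∈ K t :=
      hKconv t ht1 hx hy (div_nonneg ha0 hspos.le) (div_nonneg hb0 hspos.le)
        (by field_simp; exact hsdef.symm)
    set z := (a/s) • x + (b/s) • y with hzdef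
    have hzi : ∀ i, z i = (a * x i + b * y i) / s := by
      intro i
      simp only [hzdef, Pi.add_apply, Pi.smul_apply, smul_eq_mul]
      ring
    obtain ⟨p, hp, hpz⟩ := happrox z hz
    refine ⟨p, hp, fun i => ?_⟩
    -- per-coordinate estimates
    have hX : logt t (a * x i) = lam + logt t (x i) := by
      rw [hadef]; exact logt_weight ht1 hlam (hxpos i)
    have hY : logt t (b * y i) = mu + logt t (y i) := by
      rw [hbdef]; exact logt_weight ht1 hmu (hypos i)
    set X := a * x i with hXdef
    set Y := b * y i with hYdef
    have hXnn : 0 ≤ X := mul_nonneg ha0 (hxpos i)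
    have hYnn : 0 ≤ Y := mul_nonneg hb0 (hypos i)
    set m := max X Y with hmdef
    have hmnn : 0 ≤ m := le_trans hXnn (le_max_left _ _)
    have hmXY : m ≤ X + Y := by
      rcases max_cases X Y with ⟨he, _⟩ | ⟨he, _⟩ <;> rw [hmdef, he] <;> linarith
    have hXYm : X + Y ≤ 2 * m := by
      have h1 := le_max_left X Y; have h2 := le_max_right X Y
      rw [hmdef]; linarith
    have hzival : z i = (X + Y) / s := hzi i
    have hznn : 0 ≤ z i := by rw [hzival]; positivity
    set Li : EReal := max (lam + logt t (x i)) (mu + logt t (y i)) with hLidef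
    have hLm : logt t m = Li := by
      rw [hmdef, logt_max ht1 hXnn hYnn, hX, hY]
    have hlogcast : ((Real.logb t 2 : ℝ) : EReal) ≤ ((ε' : ℝ) : EReal) := by
      exact_mod_cast hlog2
    -- claim1 : logt t (z i) ≤ Li + ε'
    have claim1 : logt t (z i) ≤ Li + (ε' : EReal) := by
      rcases eq_or_lt_of_le hmnn with h0 | h0
      · have hz0 : z i = 0 := by
          have hle : z i ≤ 0 := by
            rw [hzival]
            apply div_nonpos_of_nonpos_of_nonneg _ hspos.le
            rw [← h0] at hXYm; linarith
          linarith
        rw [hz0, logt_zero]; exact bot_le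
      · have hub : z i ≤ 2 * m := by
          rw [hzival]
          calc (X + Y) / s ≤ X + Y := div_le_self (by linarith) hs1
            _ ≤ 2 * m := hXYm
        calc logt t (z i) ≤ logt t (2 * m) := logt_mono ht1 hznn hub
          _ = ((Real.logb t 2 : ℝ) : EReal) + logt t m := logt_two_mul ht1 h0
          _ ≤ ((ε' : ℝ) : EReal) + logt t m := add_le_add_left hlogcast _
          _ = Li + (ε' : EReal) := by rw [hLm, add_comm]
    -- claim2 : Li ≤ logt t (z i) + ε'
    have claim2 : Li ≤ logt t (z i) + (ε' : EReal) := by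
      rw [← hLm]
      rcases eq_or_lt_of_le hmnn with h0 | h0
      · rw [← h0, logt_zero]; exact bot_le
      · have hzpos : 0 < z i := by
          rw [hzival]; exact div_pos (lt_of_lt_of_le h0 hmXY) hspos
        have hub2 : m ≤ 2 * z i := by
          have h2 : m / 2 ≤ (X + Y) / s := by
            rw [div_le_div_iff₀ (by norm_num : (0:ℝ) < 2) hspos]
            nlinarith
          rw [hzival]; linarith
        calc logt t m ≤ logt t (2 * z i) := logt_mono ht1 hmnn hub2
          _ = ((Real.logb t 2 : ℝ) : EReal) + logt t (z i) := logt_two_mul ht1 hzpos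
          _ ≤ ((ε' : ℝ) : EReal) + logt t (z i) := add_le_add_left hlogcast _
          _ = logt t (z i) + (ε' : EReal) := add_comm _ _
    -- compare Li with w i
    have wclaim1 : Li ≤ w i + (ε' : EReal) := by
      have h1 : lam + logt t (x i) ≤ (u i + lam) + (ε' : EReal) := by
        calc lam + logt t (x i) ≤ lam + (u i + (ε' : EReal)) :=
              add_le_add_right (hxu i).1 lam
          _ = (u i + lam) + (ε' : EReal) := by
              rw [← add_assoc, add_comm lam (u i)]
      have h2 : mu + logt t (y i) ≤ (v i + mu) + (ε' : EReal) := by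
        calc mu + logt t (y i) ≤ mu + (v i + (ε' : EReal)) :=
              add_le_add_right (hyv i).1 mu
          _ = (v i + mu) + (ε' : EReal) := by
              rw [← add_assoc, add_comm mu (v i)]
      exact max_le (h1.trans (add_le_add_left (le_max_left _ _) _))
        (h2.trans (add_le_add_left (le_max_right _ _) _))
    have wclaim2 : w i ≤ Li + (ε' : EReal) := by
      have h1 : u i + lam ≤ Li + (ε' : EReal) := by
        calc u i + lam = lam + u i := add_comm _ _
          _ ≤ lam + (logt t (x i) + (ε' : EReal)) := add_le_add_right (hxu i).2 lam
          _ = (lam + logt t (x i)) + (ε' : EReal) := (add_assoc _ _ _).symm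
          _ ≤ Li + (ε' : EReal) := add_le_add_left (le_max_left _ _) _
      have h2 : v i + mu ≤ Li + (ε' : EReal) := by
        calc v i + mu = mu + v i := add_comm _ _
          _ ≤ mu + (logt t (y i) + (ε' : EReal)) := add_le_add_right (hyv i).2 mu
          _ = (mu + logt t (y i)) + (ε' : EReal) := (add_assoc _ _ _).symm
          _ ≤ Li + (ε' : EReal) := add_le_add_left (le_max_right _ _) _
      exact max_le h1 h2
    have hsum3 : ∀ c : EReal, c + (ε' : EReal) + (ε' : EReal) + (ε' : EReal)
        = c + (ε : EReal) := by
      intro c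
      have hc : (ε' : EReal) + (ε' : EReal) + (ε' : EReal) = (ε : EReal) := by
        rw [← EReal.coe_add, ← EReal.coe_add,
          (show ε' + ε' + ε' = ε by rw [hε'def]; ring)]
      rw [← hc, ← add_assoc, ← add_assoc]
    obtain ⟨hpz1, hpz2⟩ := hpz i
    constructor
    · calc p i ≤ logt t (z i) + (ε' : EReal) := hpz2
        _ ≤ (Li + (ε' : EReal)) + (ε' : EReal) := add_le_add_left claim1 _
        _ ≤ ((w i + (ε' : EReal)) + (ε' : EReal)) + (ε' : EReal) :=
            add_le_add_left (add_le_add_left wclaim1 _) _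
        _ = w i + (ε : EReal) := hsum3 (w i)
    · calc w i ≤ Li + (ε' : EReal) := wclaim2
        _ ≤ (logt t (z i) + (ε' : EReal)) + (ε' : EReal) := add_le_add_left claim2 _
        _ ≤ ((p i + (ε' : EReal)) + (ε' : EReal)) + (ε' : EReal) :=
            add_le_add_left (add_le_add_left hpz1 _) _
        _ = p i + (ε : EReal) := hsum3 (p i)
  -- closure argument
  have hseq : ∀ k : ℕ, ∃ p, p ∈ Kbar ∧ ∀ i,
      p i ≤ w i + ((1 / (k + 1) : ℝ) : EReal) ∧ w i ≤ p i + ((1 / (k + 1) : ℝ) : EReal) := by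
    intro k
    obtain ⟨p, hp, h⟩ := key (1 / (k + 1)) (by positivity)
    exact ⟨p, hp, h⟩
  choose p hpK hp using hseq
  have htend : Filter.Tendsto p Filter.atTop (nhds w) := by
    rw [tendsto_pi_nhds]
    intro i
    have hek : ∀ k : ℕ, (0:ℝ) < 1 / (k + 1) := fun k => by positivity
    have hwtop : w i ≠ ⊤ := by
      have h1 : u i + lam < ⊤ := EReal.add_lt_top (hbar u hu i) hlamt
      have h2 : v i + mu < ⊤ := EReal.add_lt_top (hbar v hv i) hmut
      exact (max_lt h1 h2).ne
    rcases eq_or_ne (w i) ⊥ with hbot | hbot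
    · have hpb : ∀ k, p k i = ⊥ := by
        intro k
        have h1 := (hp k i).1
        rw [hbot, EReal.bot_add] at h1
        exact le_bot_iff.mp h1
      simp only [hpb, hbot]
      exact tendsto_const_nhds
    · set r := (w i).toReal with hrdef
      have hwr : ((r : ℝ) : EReal) = w i := EReal.coe_toReal hwtop hbot
      have hprop : ∀ k : ℕ, p k i ≠ ⊤ ∧ p k i ≠ ⊥ := by
        intro k
        constructor
        · intro hT
          have h1 := (hp k i).1
          rw [hT] at h1
          exact (EReal.add_lt_top hwtop (EReal.coe_ne_top _)).ne (top_le_iff.mp h1)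
        · intro hB
          have h2 := (hp k i).2
          rw [hB, EReal.bot_add] at h2
          exact hbot (le_bot_iff.mp h2)
      set q : ℕ → ℝ := fun k => (p k i).toReal with hqdef
      have hqe : ∀ k, ((q k : ℝ) : EReal) = p k i := fun k =>
        EReal.coe_toReal (hprop k).1 (hprop k).2
      have hub : ∀ k, q k ≤ r + 1 / (k + 1) := by
        intro k
        have h1 := (hp k i).1
        rw [← hqe k, ← hwr, ← EReal.coe_add] at h1
        exact_mod_cast h1
      have hlb : ∀ k, r - 1 / (k + 1) ≤ q k := by
        intro k
        have h2 := (hp k i).2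
        rw [← hqe k, ← hwr, ← EReal.coe_add] at h2
        have := EReal.coe_le_coe_iff.mp h2
        linarith
      have hq : Filter.Tendsto q Filter.atTop (nhds r) := by
        have h0 : Filter.Tendsto (fun k : ℕ => (1 / (k + 1) : ℝ)) Filter.atTop (nhds 0) :=
          tendsto_one_div_add_atTop_nhds_zero_nat
        have hlo : Filter.Tendsto (fun k : ℕ => r - 1 / (k + 1)) Filter.atTop (nhds r) := by
          simpa using h0.const_sub r
        have hhi : Filter.Tendsto (fun k : ℕ => r + 1 / (k + 1)) Filter.atTop (nhds r) := by
          simpa using h0.const_add r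
        exact tendsto_of_tendsto_of_tendsto_of_le_of_le hlo hhi hlb hub
      have : (fun k => p k i) = fun k => ((q k : ℝ) : EReal) :=
        funext fun k => (hqe k).symm
      rw [this, ← hwr]
      exact EReal.tendsto_coe.mpr hq
  exact hclosed.mem_of_tendsto htend (Filter.Eventually.of_forall hpK)
end

section
/- Let K ⊆ T^n be a closed tropically convex set containing the point (−∞,…,−∞), let c ∈ T^n, and for λ ∈ R let C(λ) be the tropical barycenter (coordinatewise supremum, which belongs to the set) of K_λ = {u ∈ K : max_i(c_i + u_i) ≤ −λ}, assumed nonempty and bounded above. Then for λ' ≤ λ one has C(λ) ≤ C(λ') ≤ C(λ) + (λ − λ')·1 entrywise; in particular the tropical central path λ ↦ C(λ) is nonincreasing and 1-Lipschitz in the sup-norm. -/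
/-- monotonicity and 1-Lipschitz property of the tropical central path:
`C(λ) ≤ C(λ') ≤ C(λ) + (λ − λ')·1` for `λ' ≤ λ`. Here `T = ℝ ∪ {−∞}` is modelled
inside `EReal`, `K` is a closed tropically convex set containing `(−∞,…,−∞)`, and
`C(λ)` is the tropical barycenter of `K_λ = {u ∈ K : maxᵢ(cᵢ + uᵢ) ≤ −λ}`. -/
theorem stmt7 (n : ℕ) (Kbar : Set (Fin n → EReal)) (c : Fin n → EReal)
    (hKtop : ∀ u ∈ Kbar, ∀ i, u i ≠ ⊤) (hctop : ∀ i, c i ≠ ⊤)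
    (hclosed : IsClosed Kbar)
    (htconv : ∀ u ∈ Kbar, ∀ v ∈ Kbar, ∀ lam mu : EReal, max lam mu = 0 →
      (fun i => max (u i + lam) (v i + mu)) ∈ Kbar)
    (hbot : (fun _ : Fin n => (⊥ : EReal)) ∈ Kbar)
    (C : ℝ → Fin n → EReal)
    (hC : ∀ lam : ℝ,
      (C lam ∈ Kbar ∧ (⨆ i : Fin n, (c i + C lam i)) ≤ ((-lam : ℝ) : EReal)) ∧
      ∀ u ∈ Kbar, (⨆ i : Fin n, (c i + u i)) ≤ ((-lam : ℝ) : EReal) →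
        ∀ i, u i ≤ C lam i) :
    ∀ lam lam' : ℝ, lam' ≤ lam →
      ∀ i, C lam i ≤ C lam' i ∧ C lam' i ≤ C lam i + ((lam - lam' : ℝ) : EReal) := by
  intro lam lam' hle i
  obtain ⟨⟨hmemL, hconL⟩, hmaxL⟩ := hC lam
  obtain ⟨⟨hmemL', hconL'⟩, hmaxL'⟩ := hC lam'
  constructor
  · -- C lam is feasible for lam' since -lam ≤ -lam'
    exact hmaxL' (C lam) hmemL (hconL.trans (by exact_mod_cast neg_le_neg hle)) i
  · -- shift C lam' down by lam - lam'
    set d : EReal := ((lam' - lam : ℝ) : EReal) with hd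
    have hd0 : d ≤ 0 := by rw [hd]; exact_mod_cast sub_nonpos.mpr hle
    have hmax0 : max d (0 : EReal) = 0 := max_eq_right hd0
    have hw := htconv (C lam') hmemL' _ hbot d 0 hmax0
    have hweq : (fun j => max (C lam' j + d) ((fun _ : Fin n => (⊥ : EReal)) j + 0)) =
        fun j => C lam' j + d := by
      funext j
      simp
    rw [hweq] at hw
    have hcon : (⨆ j : Fin n, (c j + (C lam' j + d))) ≤ ((-lam : ℝ) : EReal) := by
      apply iSup_le
      intro j
      have h1 : c j + C lam' j ≤ ((-lam' : ℝ) : EReal) := le_trans (le_iSup (fun j => c j + C lam' j) j) hconL'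
      have h2 : c j + C lam' j + d ≤ ((-lam' : ℝ) : EReal) + d := add_le_add_left h1 d
      rw [← add_assoc]
      refine h2.trans (le_of_eq ?_)
      rw [hd, ← EReal.coe_add]
      norm_cast
      ring
    have hle2 : C lam' i + d ≤ C lam i := hmaxL _ hw hcon i
    have := add_le_add_left hle2 (((lam - lam' : ℝ) : EReal))
    calc C lam' i = C lam' i + d + ((lam - lam' : ℝ) : EReal) := by
          rw [add_assoc, hd, ← EReal.coe_add]
          norm_num
      _ ≤ C lam i + ((lam - lam' : ℝ) : EReal) := this
end

section
/- For any two points u, v ∈ R^n, the tropical segment tsegm(u,v) = {(u + λe) ∨ (v + μe) : λ, μ ∈ R ∪ {−∞}, max(λ,μ) = 0} is a polygonal curve connecting u and v, each of whose ordinary line segments is directed by a vector with entries in {0, ±1}. -/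
/-- The tropical segment between two points `u, v ∈ ℝⁿ`: all points
`(u + λe) ∨ (v + μe)` with `max(λ, μ) = 0` (for real `u, v` the extreme values
`λ, μ = −∞` are realized by sufficiently negative real scalars). -/
def tsegm {n : ℕ} (u v : Fin n → ℝ) : Set (Fin n → ℝ) :=
  {w | ∃ lam mu : ℝ, max lam mu = 0 ∧ w = fun i => max (u i + lam) (v i + mu)}

namespace Stmt12Aux

noncomputable def tf {n : ℕ} (u v : Fin n → ℝ) (s : ℝ) : Fin n → ℝ :=
  fun i => max (u i + min 0 (-s)) (v i + min 0 s)

lemma tf_mem {n : ℕ} (u v : Fin n → ℝ) (s : ℝ) : tf u v s ∈ tsegm u v := by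
  refine ⟨min 0 (-s), min 0 s, ?_, rfl⟩
  rcases le_total s 0 with h | h
  · rw [min_eq_left (by linarith), min_eq_right h, max_eq_left h]
  · rw [min_eq_right (by linarith), min_eq_left h, max_eq_right (by linarith)]

lemma tsegm_eq_range {n : ℕ} (u v : Fin n → ℝ) : tsegm u v = Set.range (tf u v) := by
  ext w
  constructor
  · rintro ⟨lam, mu, hmax, rfl⟩
    have hlam : lam ≤ 0 := hmax ▸ le_max_left lam mu
    have hmu : mu ≤ 0 := hmax ▸ le_max_right lam mu
    rcases max_choice lam mu with h | h
    · -- lam = 0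
      rw [hmax] at h
      refine ⟨mu, ?_⟩
      funext i
      simp only [tf]
      rw [min_eq_left (by linarith), min_eq_right hmu, h]
    · rw [hmax] at h
      refine ⟨-lam, ?_⟩
      funext i
      simp only [tf, neg_neg]
      rw [min_eq_right hlam, min_eq_left (by linarith), h]
  · rintro ⟨s, rfl⟩
    exact tf_mem u v s

lemma tf_eq_left {n : ℕ} (u v : Fin n → ℝ) (s : ℝ) (h0 : s ≤ 0)
    (h : ∀ i, s ≤ u i - v i) : tf u v s = u := by
  funext i
  simp only [tf]
  rw [min_eq_left (by linarith), min_eq_right h0, add_zero]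
  exact max_eq_left (by have := h i; linarith)

lemma tf_eq_right {n : ℕ} (u v : Fin n → ℝ) (s : ℝ) (h0 : 0 ≤ s)
    (h : ∀ i, u i - v i ≤ s) : tf u v s = v := by
  funext i
  simp only [tf]
  rw [min_eq_right (by linarith), min_eq_left h0, add_zero]
  exact max_eq_right (by have := h i; linarith)

lemma tf_coord_cases {n : ℕ} (u v : Fin n → ℝ) (i : Fin n) (a b : ℝ) (hab : a ≤ b)
    (h0 : b ≤ 0 ∨ 0 ≤ a) (hc : b ≤ u i - v i ∨ u i - v i ≤ a) :
    ∃ d : ℝ, (d = 0 ∨ d = 1 ∨ d = -1) ∧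
      ∀ s, a ≤ s → s ≤ b → tf u v s i = tf u v a i + d * (s - a) := by
  have key : ∀ s : ℝ, s ≤ 0 → tf u v s i = max (u i) (v i + s) := by
    intro s hs
    simp only [tf]
    rw [min_eq_left (by linarith), min_eq_right hs, add_zero]
  have key' : ∀ s : ℝ, 0 ≤ s → tf u v s i = max (u i - s) (v i) := by
    intro s hs
    simp only [tf]
    rw [min_eq_right (by linarith), min_eq_left hs, add_zero, sub_eq_add_neg]
  rcases h0 with h0 | h0
  · rcases hc with hcc | hcc
    · refine ⟨0, Or.inl rfl, fun s h1 h2 => ?_⟩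
      rw [key s (h2.trans h0), key a (hab.trans h0),
        max_eq_left (by linarith), max_eq_left (by linarith)]
      ring
    · refine ⟨1, Or.inr (Or.inl rfl), fun s h1 h2 => ?_⟩
      rw [key s (h2.trans h0), key a (hab.trans h0),
        max_eq_right (by linarith), max_eq_right (by linarith)]
      ring
  · rcases hc with hcc | hcc
    · refine ⟨-1, Or.inr (Or.inr rfl), fun s h1 h2 => ?_⟩
      rw [key' s (h0.trans h1), key' a h0,
        max_eq_left (by linarith), max_eq_left (by linarith)]
      ring
    · refine ⟨0, Or.inl rfl, fun s h1 h2 => ?_⟩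
      rw [key' s (h0.trans h1), key' a h0,
        max_eq_right (by linarith), max_eq_right (by linarith)]
      ring

lemma tf_piece {n : ℕ} (u v : Fin n → ℝ) (a b : ℝ) (hab : a ≤ b)
    (h0 : b ≤ 0 ∨ 0 ≤ a) (hc : ∀ i, b ≤ u i - v i ∨ u i - v i ≤ a) :
    ∃ d : Fin n → ℝ, (∀ i, d i = 0 ∨ d i = 1 ∨ d i = -1) ∧
      ∀ s, a ≤ s → s ≤ b → ∀ i, tf u v s i = tf u v a i + d i * (s - a) := by
  choose d hd1 hd2 using fun i => tf_coord_cases u v i a b hab h0 (hc i)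
  exact ⟨d, hd1, fun s h1 h2 i => hd2 i s h1 h2⟩

lemma seg_mem {n : ℕ} (u v : Fin n → ℝ) (a b : ℝ) (d : Fin n → ℝ)
    (hd : ∀ s, a ≤ s → s ≤ b → ∀ i, tf u v s i = tf u v a i + d i * (s - a))
    (hab : a ≤ b) (s : ℝ) (h1 : a ≤ s) (h2 : s ≤ b) :
    tf u v s ∈ segment ℝ (tf u v a) (tf u v b) := by
  rcases eq_or_lt_of_le hab with rfl | hlt
  · have hs : s = a := le_antisymm h2 h1
    subst hs
    exact left_mem_segment _ _ _
  · set t := (s - a) / (b - a) with ht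
    have ht0 : 0 ≤ t := div_nonneg (by linarith) (by linarith)
    have ht1 : t ≤ 1 := (div_le_one (by linarith)).2 (by linarith)
    refine ⟨1 - t, t, by linarith, ht0, by ring, ?_⟩
    funext i
    have e1 := hd s h1 h2 i
    have e2 := hd b hab le_rfl i
    have hts : t * (b - a) = s - a := div_mul_cancel₀ _ (by linarith)
    simp only [Pi.add_apply, Pi.smul_apply, smul_eq_mul]
    rw [e1, e2]
    linear_combination d i * hts

lemma seg_sub {n : ℕ} (u v : Fin n → ℝ) (a b : ℝ) (d : Fin n → ℝ)
    (hd : ∀ s, a ≤ s → s ≤ b → ∀ i, tf u v s i = tf u v a i + d i * (s - a))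
    (hab : a ≤ b) (w : Fin n → ℝ) (hw : w ∈ segment ℝ (tf u v a) (tf u v b)) :
    ∃ s, w = tf u v s := by
  obtain ⟨α, β, hα, hβ, hαβ, hw⟩ := hw
  have hb : 0 ≤ β * (b - a) := mul_nonneg hβ (by linarith)
  refine ⟨α * a + β * b, ?_⟩
  have ha1 : α = 1 - β := by linarith
  have key1 : α * a + β * b - a = β * (b - a) := by rw [ha1]; ring
  have key2 : b - (α * a + β * b) = α * (b - a) := by rw [ha1]; ring
  have hs1 : a ≤ α * a + β * b := by linarith
  have hs2 : α * a + β * b ≤ b := by nlinarith [mul_nonneg hα (sub_nonneg.2 hab)]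
  rw [← hw]
  funext i
  have e1 := hd (α * a + β * b) hs1 hs2 i
  have e2 := hd b hab le_rfl i
  simp only [Pi.add_apply, Pi.smul_apply, smul_eq_mul]
  rw [e1, e2, ha1]
  ring

lemma build {n : ℕ} (u v : Fin n → ℝ) (k : ℕ) (hk1 : 1 ≤ k) (g : Fin (k + 1) → ℝ)
    (gmono : ∀ j j' : Fin (k + 1), j ≤ j' → g j ≤ g j')
    (hleft : g 0 ≤ 0) (hleft' : ∀ i, g 0 ≤ u i - v i)
    (hright : 0 ≤ g (Fin.last k)) (hright' : ∀ i, u i - v i ≤ g (Fin.last k))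
    (hbetween : ∀ i : Fin k, ∀ x, (x = 0 ∨ ∃ j, x = u j - v j) →
      x ≤ g i.castSucc ∨ g i.succ ≤ x) :
    ∃ (p : Fin (k + 1) → Fin n → ℝ),
      p 0 = u ∧ p (Fin.last k) = v ∧
      (∀ i : Fin k, ∃ (c : ℝ) (d : Fin n → ℝ), 0 ≤ c ∧
        (∀ j, d j = 0 ∨ d j = 1 ∨ d j = -1) ∧
        p i.succ = p i.castSucc + c • d) ∧
      tsegm u v = ⋃ i : Fin k, segment ℝ (p i.castSucc) (p i.succ) := by
  classical
  have hstep : ∀ i : Fin k, g i.castSucc ≤ g i.succ :=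
    fun i => gmono _ _ (Fin.castSucc_le_succ i)
  have hpiece : ∀ i : Fin k, ∃ d : Fin n → ℝ,
      (∀ j, d j = 0 ∨ d j = 1 ∨ d j = -1) ∧
      ∀ s, g i.castSucc ≤ s → s ≤ g i.succ → ∀ j,
        tf u v s j = tf u v (g i.castSucc) j + d j * (s - g i.castSucc) := by
    intro i
    refine tf_piece u v _ _ (hstep i) ?_ ?_
    · rcases hbetween i 0 (Or.inl rfl) with h | h
      · exact Or.inr h
      · exact Or.inl h
    · intro j
      rcases hbetween i (u j - v j) (Or.inr ⟨j, rfl⟩) with h | h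
      · exact Or.inr h
      · exact Or.inl h
  choose d hd1 hd2 using hpiece
  refine ⟨fun j => tf u v (g j), ?_, ?_, ?_, ?_⟩
  · exact tf_eq_left u v (g 0) hleft hleft'
  · exact tf_eq_right u v (g (Fin.last k)) hright hright'
  · intro i
    refine ⟨g i.succ - g i.castSucc, d i, by have := hstep i; linarith, hd1 i, ?_⟩
    funext j
    have h := hd2 i (g i.succ) (hstep i) le_rfl j
    simp only [Pi.add_apply, Pi.smul_apply, smul_eq_mul]
    rw [h]; ring
  · ext w
    constructor
    · intro hw
      rw [tsegm_eq_range] at hw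
      obtain ⟨s, rfl⟩ := hw
      have hle0last : g 0 ≤ g (Fin.last k) := gmono _ _ (Fin.zero_le _)
      set x : ℝ := max (g 0) (min s (g (Fin.last k))) with hx
      have hx1 : g 0 ≤ x := le_max_left _ _
      have hx2 : x ≤ g (Fin.last k) := max_le hle0last (min_le_right _ _)
      have hfx : tf u v s = tf u v x := by
        rcases lt_or_ge s (g 0) with h | h
        · have hxm : x = g 0 := by
            rw [hx, min_eq_left (by linarith), max_eq_left (by linarith)]
          rw [hxm, tf_eq_left u v s (by linarith) (fun i => by have := hleft' i; linarith),
            tf_eq_left u v (g 0) hleft hleft']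
        · rcases le_or_gt s (g (Fin.last k)) with h' | h'
          · have hxm : x = s := by rw [hx, min_eq_left h', max_eq_right h]
            rw [hxm]
          · have hxm : x = g (Fin.last k) := by
              rw [hx, min_eq_right (by linarith), max_eq_right (by linarith)]
            rw [hxm, tf_eq_right u v s (by linarith) (fun i => by have := hright' i; linarith),
              tf_eq_right u v (g (Fin.last k)) hright hright']
      have hcov : ∃ i : Fin k, g i.castSucc ≤ x ∧ x ≤ g i.succ := by
        have hTne : (Finset.filter (fun j => g j ≤ x) Finset.univ).Nonempty :=
          ⟨0, by simp only [Finset.mem_filter, Finset.mem_univ, true_and]; exact hx1⟩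
        set j0 := (Finset.filter (fun j => g j ≤ x) Finset.univ).max' hTne with hj0def
        have hj0 : g j0 ≤ x :=
          (Finset.mem_filter.1 ((Finset.filter (fun j => g j ≤ x) Finset.univ).max'_mem hTne)).2
        by_cases hlast : j0 = Fin.last k
        · refine ⟨⟨k - 1, by omega⟩, ?_, ?_⟩
          · refine le_trans (gmono _ j0 ?_) hj0
            rw [hlast]
            exact Fin.le_last _
          · have hsucceq : (⟨k - 1, by omega⟩ : Fin k).succ = Fin.last k := by
              ext; simp only [Fin.val_succ, Fin.val_last]; omega
            rw [hsucceq]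
            exact hx2
        · have hlt : j0 < Fin.last k := lt_of_le_of_ne (Fin.le_last _) hlast
          have hj0k : j0.1 < k := by
            have h := hlt
            rw [Fin.lt_def] at h
            simpa using h
          refine ⟨⟨j0.1, hj0k⟩, ?_, ?_⟩
          · have hcs : (⟨j0.1, hj0k⟩ : Fin k).castSucc = j0 := by
              ext; simp
            rw [hcs]; exact hj0
          · by_contra hcon
            push_neg at hcon
            have hmem : (⟨j0.1, hj0k⟩ : Fin k).succ ∈
                Finset.filter (fun j => g j ≤ x) Finset.univ := by
              simp only [Finset.mem_filter, Finset.mem_univ, true_and]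
              linarith
            have hle := Finset.le_max' _ _ hmem
            rw [← hj0def] at hle
            rw [Fin.le_def] at hle
            simp only [Fin.val_succ] at hle
            omega
      obtain ⟨i, hi1, hi2⟩ := hcov
      refine Set.mem_iUnion.2 ⟨i, ?_⟩
      rw [hfx]
      exact seg_mem u v _ _ (d i) (hd2 i) (hstep i) x hi1 hi2
    · intro hw
      obtain ⟨i, hi⟩ := Set.mem_iUnion.1 hw
      obtain ⟨s, rfl⟩ := seg_sub u v _ _ (d i) (hd2 i) (hstep i) w hi
      exact tf_mem u v s


end Stmt12Aux

open Stmt12Aux in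
/-- the tropical segment between `u` and `v` is a polygonal curve from `u`
to `v`, each of whose ordinary segments is directed by a vector with entries in
`{0, ±1}`. -/
theorem stmt12 (n : ℕ) (u v : Fin n → ℝ) :
    ∃ (k : ℕ) (p : Fin (k + 1) → Fin n → ℝ),
      p 0 = u ∧ p (Fin.last k) = v ∧
      (∀ i : Fin k, ∃ (c : ℝ) (d : Fin n → ℝ), 0 ≤ c ∧
        (∀ j, d j = 0 ∨ d j = 1 ∨ d j = -1) ∧
        p i.succ = p i.castSucc + c • d) ∧
      tsegm u v = ⋃ i : Fin k, segment ℝ (p i.castSucc) (p i.succ) := by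
  classical
  obtain ⟨M, hM0, hMi1, hMi2⟩ : ∃ M : ℝ, 0 < M ∧ (∀ i, -M ≤ u i - v i) ∧
      (∀ i, u i - v i ≤ M) := by
    refine ⟨1 + ∑ i, |u i - v i|, ?_, ?_, ?_⟩
    · have : 0 ≤ ∑ i, |u i - v i| := Finset.sum_nonneg fun i _ => abs_nonneg _
      linarith
    · intro i
      have h1 := Finset.single_le_sum (f := fun i => |u i - v i|)
        (fun j _ => abs_nonneg _) (Finset.mem_univ i)
      have h2 := neg_abs_le (u i - v i)
      linarith
    · intro i
      have h1 := Finset.single_le_sum (f := fun i => |u i - v i|)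
        (fun j _ => abs_nonneg _) (Finset.mem_univ i)
      have h2 := le_abs_self (u i - v i)
      linarith
  obtain ⟨S, hmM, hmM', hm0, hmc, hSmem⟩ : ∃ S : Finset ℝ, -M ∈ S ∧ M ∈ S ∧ (0 : ℝ) ∈ S ∧
      (∀ i, u i - v i ∈ S) ∧ ∀ x ∈ S, x = -M ∨ x = M ∨ x = 0 ∨ ∃ i, x = u i - v i := by
    refine ⟨insert (-M) (insert M (insert 0 (Finset.image (fun i => u i - v i)
      Finset.univ))), by simp, by simp, by simp, fun i => by
        simp only [Finset.mem_insert, Finset.mem_image, Finset.mem_univ]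
        exact Or.inr (Or.inr (Or.inr ⟨i, trivial, rfl⟩)), fun x hx => by
        simp only [Finset.mem_insert, Finset.mem_image, Finset.mem_univ, true_and] at hx
        rcases hx with h | h | h | ⟨i, h⟩
        exacts [Or.inl h, Or.inr (Or.inl h), Or.inr (Or.inr (Or.inl h)),
          Or.inr (Or.inr (Or.inr ⟨i, h.symm⟩))]⟩
  obtain ⟨k, hk1, g, gmono, gsurj, gmem⟩ : ∃ (k : ℕ), 1 ≤ k ∧ ∃ g : Fin (k + 1) → ℝ,
      (∀ j j' : Fin (k + 1), j ≤ j' → g j ≤ g j') ∧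
      (∀ x ∈ S, ∃ j, g j = x) ∧ (∀ j, g j ∈ S) := by
    have hlen : (S.sort (· ≤ ·)).length = S.card := Finset.length_sort _
    have hsorted : (S.sort (· ≤ ·)).Pairwise (· ≤ ·) := Finset.pairwise_sort _ _
    have h2 : 2 ≤ (S.sort (· ≤ ·)).length := by
      rw [hlen]
      exact Finset.one_lt_card.2 ⟨-M, hmM, M, hmM', by intro h; rw [← h] at hM0; linarith⟩
    obtain ⟨m, hm⟩ : ∃ m, (S.sort (· ≤ ·)).length = m + 2 :=
      ⟨(S.sort (· ≤ ·)).length - 2, by omega⟩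
    refine ⟨m + 1, by omega, fun j => (S.sort (· ≤ ·)).get (Fin.cast hm.symm j), ?_, ?_, ?_⟩
    · intro j j' h
      exact hsorted.rel_get_of_le (by simpa using h)
    · intro x hx
      obtain ⟨j, hj⟩ := List.mem_iff_get.1 ((Finset.mem_sort (α := ℝ) (· ≤ ·)).2 hx)
      exact ⟨Fin.cast hm j, by simpa using hj⟩
    · intro j
      exact (Finset.mem_sort (α := ℝ) (· ≤ ·)).1 (List.get_mem _ _)
  have hg0 : g 0 ≤ -M := by
    obtain ⟨j, hj⟩ := gsurj (-M) hmM
    exact hj ▸ gmono 0 j (Fin.zero_le j)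
  have hglast : M ≤ g (Fin.last k) := by
    obtain ⟨j, hj⟩ := gsurj M hmM'
    exact hj ▸ gmono j (Fin.last k) (Fin.le_last j)
  refine ⟨k, ?_⟩
  refine Stmt12Aux.build u v k hk1 g gmono (by linarith)
    (fun i => by have := hMi1 i; linarith) (by linarith)
    (fun i => by have := hMi2 i; linarith) ?_
  intro i x hx
  have hxS : x ∈ S := by
    rcases hx with rfl | ⟨j, rfl⟩
    · exact hm0
    · exact hmc j
  obtain ⟨j, rfl⟩ := gsurj x hxS
  rcases le_or_gt j i.castSucc with h | h
  · exact Or.inl (gmono _ _ h)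
  · exact Or.inr (gmono _ _ (Fin.castSucc_lt_iff_succ_le.1 h))
end

section
/- For every λ ∈ R, the n-th coordinate of the tropical central path C(λ) of the tropical linear program tcex_n equals min(−λ, 0). Moreover, C(λ) = 0 (the all-zeros vector) for all λ ≤ 0. -/
open scoped BigOperators

/-- The exponents `u_k = 3·2^{k−2} − 1` (for `k ≥ 1`). -/
noncomputable def uexp (k : ℕ) : ℝ := 3 * (2 : ℝ) ^ ((k : ℝ) - 2) - 1

/-- Access to the `j`-th coordinate (1-indexed, `1 ≤ j ≤ n`) of a vector in `Fin n`. -/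
def idx (n : ℕ) (hn : 0 < n) (j : ℕ) : Fin n := ⟨(j - 1) % n, Nat.mod_lt _ hn⟩

/-- Feasible set of the tropical linear program `tcex_n`, with `T = ℝ ∪ {−∞}` modelled
inside `EReal`. -/
def tcexFeas (n : ℕ) (hn : 0 < n) (x : Fin n → EReal) : Prop :=
  (∀ i : ℕ, 1 ≤ i → i ≤ n - 1 →
    (⨆ j ∈ Finset.Icc 1 (i - 1), (((-uexp i : ℝ) : EReal) + x (idx n hn j))) ⊔
        (((-uexp (i + 1) + 1 : ℝ) : EReal) + x (idx n hn i)) ≤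
      (⨆ j ∈ Finset.Icc (i + 1) (n - 1), (((-uexp j : ℝ) : EReal) + x (idx n hn j))) ⊔
        x (idx n hn n) ⊔ ((-uexp n : ℝ) : EReal)) ∧
  (∀ j : Fin n, x j ≤ 0) ∧
  (∀ i : ℕ, 1 ≤ i → i ≤ n - 2 → x (idx n hn i) ≤ x (idx n hn (i + 1))) ∧
  (2 ≤ n → x (idx n hn (n - 1)) ≤ ((uexp n : ℝ) : EReal) + x (idx n hn n))


lemma uexp_half (k : ℕ) (hk : 1 ≤ k) : (1/2 : ℝ) ≤ uexp k := by
  have h1 : (-1 : ℝ) ≤ (k : ℝ) - 2 := by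
    have : (1 : ℝ) ≤ (k : ℝ) := by exact_mod_cast hk
    linarith
  have h2 : (2 : ℝ) ^ (-1 : ℝ) ≤ (2 : ℝ) ^ ((k : ℝ) - 2) :=
    Real.rpow_le_rpow_of_exponent_le one_le_two h1
  have h3 : (2 : ℝ) ^ (-1 : ℝ) = 1/2 := by
    rw [Real.rpow_neg_one]; norm_num
  rw [h3] at h2
  unfold uexp; linarith

lemma uexp_one (k : ℕ) (hk : 2 ≤ k) : (1 : ℝ) ≤ uexp k := by
  have h1 : (0 : ℝ) ≤ (k : ℝ) - 2 := by
    have : (2 : ℝ) ≤ (k : ℝ) := by exact_mod_cast hk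
    linarith
  have h2 : (2 : ℝ) ^ (0 : ℝ) ≤ (2 : ℝ) ^ ((k : ℝ) - 2) :=
    Real.rpow_le_rpow_of_exponent_le one_le_two h1
  rw [Real.rpow_zero] at h2
  unfold uexp; linarith

lemma constFeas (n : ℕ) (hn : 0 < n) (c : ℝ) (hc : c ≤ 0) :
    tcexFeas n hn (fun _ => (c : EReal)) := by
  refine ⟨?_, ?_, ?_, ?_⟩
  · intro i hi1 hin
    have hui : (1/2 : ℝ) ≤ uexp i := uexp_half i hi1
    have hui1 : (1 : ℝ) ≤ uexp (i+1) := uexp_one (i+1) (by omega)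
    have hcRHS : ((c : ℝ) : EReal) ≤
        (⨆ j ∈ Finset.Icc (i + 1) (n - 1),
          (((-uexp j : ℝ) : EReal) + (c : EReal))) ⊔
          ((c : EReal)) ⊔ ((-uexp n : ℝ) : EReal) :=
      le_trans (le_trans le_sup_right le_sup_left) le_rfl
    apply sup_le
    · apply iSup₂_le
      intro j hj
      refine le_trans ?_ hcRHS
      have : ((-uexp i : ℝ) : EReal) + (c : EReal) = ((-uexp i + c : ℝ) : EReal) := by
        norm_cast
      rw [this]
      exact_mod_cast (by linarith : -uexp i + c ≤ c)
    · refine le_trans ?_ hcRHS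
      have : ((-uexp (i+1) + 1 : ℝ) : EReal) + (c : EReal)
          = ((-uexp (i+1) + 1 + c : ℝ) : EReal) := by norm_cast
      rw [this]
      exact_mod_cast (by linarith : -uexp (i+1) + 1 + c ≤ c)
  · intro j
    show (c : EReal) ≤ 0
    exact_mod_cast hc
  · intro i _ _
    exact le_rfl
  · intro hn2
    have hun : (1/2 : ℝ) ≤ uexp n := uexp_half n (by omega)
    have : ((uexp n : ℝ) : EReal) + (c : EReal) = ((uexp n + c : ℝ) : EReal) := by
      norm_cast
    show (c : EReal) ≤ ((uexp n : ℝ) : EReal) + (c : EReal)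
    rw [this]
    exact_mod_cast (by linarith : c ≤ uexp n + c)

/-- the `n`-th coordinate of the tropical central path of `tcex_n` is
`min(−λ, 0)`, and the path is the zero vector for `λ ≤ 0`. -/
theorem stmt13 (n : ℕ) (hn : 0 < n) (C : ℝ → Fin n → EReal)
    (hC : ∀ lam : ℝ,
      (tcexFeas n hn (C lam) ∧ C lam (idx n hn n) ≤ ((-lam : ℝ) : EReal)) ∧
      (∀ x : Fin n → EReal, tcexFeas n hn x → x (idx n hn n) ≤ ((-lam : ℝ) : EReal) →
        ∀ i, x i ≤ C lam i)) :
    (∀ lam : ℝ, C lam (idx n hn n) = ((min (-lam) 0 : ℝ) : EReal)) ∧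
    (∀ lam : ℝ, lam ≤ 0 → C lam = fun _ => (0 : EReal)) := by
  constructor
  · intro lam
    set m : ℝ := min (-lam) 0 with hm
    have hm0 : m ≤ 0 := min_le_right _ _
    have hfeas := constFeas n hn m hm0
    have hx : ((m : ℝ) : EReal) ≤ ((-lam : ℝ) : EReal) := by
      exact_mod_cast min_le_left (-lam) 0
    have hle : ((m : ℝ) : EReal) ≤ C lam (idx n hn n) :=
      (hC lam).2 _ hfeas hx (idx n hn n)
    have h1 : C lam (idx n hn n) ≤ ((-lam : ℝ) : EReal) := (hC lam).1.2
    have h2 : C lam (idx n hn n) ≤ ((0 : ℝ) : EReal) := by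
      simpa using ((hC lam).1.1).2.1 (idx n hn n)
    refine le_antisymm ?_ hle
    have : ((m : ℝ) : EReal) = ((-lam : ℝ) : EReal) ⊓ ((0 : ℝ) : EReal) := by
      rw [hm]; exact_mod_cast rfl
    rw [this]
    exact le_inf h1 h2
  · intro lam hlam
    funext i
    have hfeas := constFeas n hn 0 le_rfl
    have hx : ((0 : ℝ) : EReal) ≤ ((-lam : ℝ) : EReal) := by
      exact_mod_cast (by linarith : (0:ℝ) ≤ -lam)
    have hge := (hC lam).2 _ hfeas hx i
    have hle : C lam i ≤ ((0 : ℝ) : EReal) := by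
      simpa using ((hC lam).1.1).2.1 i
    have : C lam i = ((0:ℝ) : EReal) := le_antisymm hle hge
    simpa using this
end

section
/- For t sufficiently large, in the polytope cex_n(t), the two facets defined by the equalities Σ_{j=1}^n x_j = 1 and x_{n−1} = t^{u_n} x_n are disjoint: no feasible point satisfies both. -/
open scoped BigOperators

/-- Feasibility in the polytope `cex_n(t)`. -/
noncomputable def cexFeas (n : ℕ) (hn : 0 < n) (t : ℝ) (x : Fin n → ℝ) : Prop :=
  (∀ i : ℕ, 1 ≤ i → i ≤ n - 1 →
    t ^ (-uexp i) * (∑ j ∈ Finset.Icc 1 (i - 1), x (idx n hn j)) +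
        t ^ (-uexp (i + 1) + 1) * x (idx n hn i) ≤
      (∑ j ∈ Finset.Icc (i + 1) (n - 1), t ^ (-uexp j) * x (idx n hn j)) +
        x (idx n hn n) + t ^ (-uexp n)) ∧
  (∑ j, x j ≤ 1) ∧
  (0 ≤ x (idx n hn 1)) ∧
  (∀ i : ℕ, 1 ≤ i → i ≤ n - 2 → x (idx n hn i) ≤ x (idx n hn (i + 1))) ∧
  (x (idx n hn (n - 1)) ≤ t ^ (uexp n) * x (idx n hn n))

/-- for `t` large enough, the facets of `cex_n(t)` given by
`Σⱼ xⱼ = 1` and `x_{n−1} = t^{u_n} x_n` are disjoint. -/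
theorem stmt15 (n : ℕ) (hn : 2 ≤ n) :
    ∃ t₀ : ℝ, 1 < t₀ ∧ ∀ t : ℝ, t₀ ≤ t → ∀ x : Fin n → ℝ,
      cexFeas n (by omega) t x →
      ¬((∑ j, x j = 1) ∧
        x (idx n (by omega) (n - 1)) = t ^ (uexp n) * x (idx n (by omega) n)) := by
  have hp : 0 < n := by omega
  refine ⟨(n : ℝ) + 2, by have : (0:ℝ) ≤ n := Nat.cast_nonneg n; linarith, ?_⟩
  intro t ht x hfeas hcontra
  obtain ⟨hsum, hfac⟩ := hcontra
  obtain ⟨hcons, hsumle, h0, hmono, _⟩ := hfeas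
  have hncast : (2:ℝ) ≤ (n:ℝ) := by exact_mod_cast hn
  have ht1 : (1:ℝ) < t := by linarith
  have ht0 : (0:ℝ) < t := by linarith
  -- uexp n is nonnegative
  have hu : 0 ≤ uexp n := by
    have h2 : (1:ℝ) ≤ (2:ℝ) ^ ((n:ℝ) - 2) := by
      apply Real.one_le_rpow (by norm_num) (by linarith)
    unfold uexp; linarith
  -- monotonicity of coordinates
  have mono : ∀ k, ∀ j, 1 ≤ j → j ≤ k → k ≤ n - 1 →
      x (idx n hp j) ≤ x (idx n hp k) := by
    intro k
    induction k with
    | zero => intro j h1 h2 _; omega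
    | succ m ih =>
      intro j h1 h2 hk
      rcases Nat.lt_or_ge j (m + 1) with h | h
      · have h1m : 1 ≤ m := by omega
        calc x (idx n hp j) ≤ x (idx n hp m) := ih j h1 (by omega) (by omega)
          _ ≤ x (idx n hp (m + 1)) := hmono m h1m (by omega)
      · have hje : j = m + 1 := by omega
        subst hje; exact le_refl _
  have nonneg : ∀ k, 1 ≤ k → k ≤ n - 1 → 0 ≤ x (idx n hp k) := by
    intro k h1 h2
    exact le_trans h0 (mono k 1 le_rfl h1 h2)
  have hxn1 : 0 ≤ x (idx n hp (n - 1)) := nonneg (n - 1) (by omega) le_rfl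
  -- powers of t
  have hB : 0 < t ^ (uexp n) := Real.rpow_pos_of_pos ht0 _
  have hB1 : 1 ≤ t ^ (uexp n) := Real.one_le_rpow ht1.le hu
  have hA : 0 < t ^ (-uexp n) := Real.rpow_pos_of_pos ht0 _
  have hAB : t ^ (-uexp n) * t ^ (uexp n) = 1 := by
    rw [← Real.rpow_add ht0]; simp
  -- x_n in terms of x_{n-1}
  have hxn : t ^ (-uexp n) * x (idx n hp (n - 1)) = x (idx n hp n) := by
    rw [hfac, ← mul_assoc, hAB, one_mul]
  have hxn0 : 0 ≤ x (idx n hp n) := by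
    rw [← hxn]; exact mul_nonneg hA.le hxn1
  have hxnle : x (idx n hp n) ≤ x (idx n hp (n - 1)) := by
    nlinarith [hfac, hB1, hxn0]
  -- instantiate the (n-1)-th constraint
  have hc := hcons (n - 1) (by omega) le_rfl
  have e1 : n - 1 + 1 = n := by omega
  rw [e1, Finset.Icc_eq_empty (by omega : ¬ n ≤ n - 1), Finset.sum_empty] at hc
  have hS : 0 ≤ ∑ j ∈ Finset.Icc 1 (n - 1 - 1), x (idx n hp j) := by
    apply Finset.sum_nonneg
    intro j hj
    rw [Finset.mem_Icc] at hj
    exact nonneg j hj.1 (by omega)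
  have hA' : 0 ≤ t ^ (-uexp (n - 1)) := (Real.rpow_pos_of_pos ht0 _).le
  have hpow : t ^ (-uexp n + 1) = t ^ (-uexp n) * t := by
    rw [Real.rpow_add ht0, Real.rpow_one]
  rw [hpow] at hc
  -- derive (t-1) * x_{n-1} ≤ 1
  have hc2 : t ^ (-uexp n) * t * x (idx n hp (n - 1)) ≤
      x (idx n hp n) + t ^ (-uexp n) := by
    nlinarith [mul_nonneg hA' hS]
  rw [← hxn] at hc2
  have hkey : (t - 1) * x (idx n hp (n - 1)) ≤ 1 := by
    have h' : t ^ (-uexp n) * ((t - 1) * x (idx n hp (n - 1))) ≤ t ^ (-uexp n) * 1 := by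
      ring_nf; ring_nf at hc2; linarith
    exact le_of_mul_le_mul_left h' hA
  -- bound every coordinate by x_{n-1}
  have hb : ∀ i : Fin n, x i ≤ x (idx n hp (n - 1)) := by
    intro i
    have hi : i = idx n hp (i.1 + 1) := by
      apply Fin.ext
      simp [idx, Nat.mod_eq_of_lt i.2]
    rcases Nat.lt_or_ge (i.1 + 1) n with h | h
    · rw [hi]; exact mono (n - 1) (i.1 + 1) (by omega) (by omega) le_rfl
    · have : i.1 + 1 = n := by omega
      rw [hi, this]; exact hxnle
  -- total sum bound
  have hsb : (1:ℝ) ≤ (n : ℝ) * x (idx n hp (n - 1)) := by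
    have := Finset.sum_le_card_nsmul Finset.univ x (x (idx n hp (n - 1)))
      (fun i _ => hb i)
    rw [Finset.card_univ, Fintype.card_fin, nsmul_eq_mul] at this
    -- the sum in hsum uses a different proof term for 0 < n, but it's the same function
    calc (1:ℝ) = ∑ j, x j := hsum.symm
      _ ≤ (n : ℝ) * x (idx n hp (n - 1)) := this
  -- contradiction
  nlinarith [mul_nonneg hxn1 (by linarith : (0:ℝ) ≤ t - 1 - ((n:ℝ) + 1)), hxn1]
end

section
/- The feasible set P of the tropical linear program tcex_n is a regular subset of T^n: P equals the closure of its interior. In particular, for every x ∈ P ∩ R^n and every ε > 0, the point x − ε·(2^{n−1}, 2^{n−2}, …, 2, 1) satisfies all the defining inequalities of tcex_n strictly. -/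
open scoped BigOperators

/-- Strict feasibility: all defining inequalities of `tcex_n` hold strictly. -/
def tcexFeasStrict (n : ℕ) (hn : 0 < n) (x : Fin n → EReal) : Prop :=
  (∀ i : ℕ, 1 ≤ i → i ≤ n - 1 →
    (⨆ j ∈ Finset.Icc 1 (i - 1), (((-uexp i : ℝ) : EReal) + x (idx n hn j))) ⊔
        (((-uexp (i + 1) + 1 : ℝ) : EReal) + x (idx n hn i)) <
      (⨆ j ∈ Finset.Icc (i + 1) (n - 1), (((-uexp j : ℝ) : EReal) + x (idx n hn j))) ⊔
        x (idx n hn n) ⊔ ((-uexp n : ℝ) : EReal)) ∧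
  (∀ j : Fin n, x j < 0) ∧
  (∀ i : ℕ, 1 ≤ i → i ≤ n - 2 → x (idx n hn i) < x (idx n hn (i + 1))) ∧
  (2 ≤ n → x (idx n hn (n - 1)) < ((uexp n : ℝ) : EReal) + x (idx n hn n))

/-! ### Auxiliary definitions and lemmas -/

open Filter Topology

/-- Left-hand side of the `i`-th main constraint, in `Finset.sup` form. -/
noncomputable def lhsS (n : ℕ) (hn : 0 < n) (i : ℕ) (x : Fin n → EReal) : EReal :=
  (Finset.Icc 1 (i - 1)).sup (fun j => ((-uexp i : ℝ) : EReal) + x (idx n hn j)) ⊔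
    (((-uexp (i + 1) + 1 : ℝ) : EReal) + x (idx n hn i))

/-- Right-hand side of the `i`-th main constraint, in `Finset.sup` form. -/
noncomputable def rhsS (n : ℕ) (hn : 0 < n) (i : ℕ) (x : Fin n → EReal) : EReal :=
  (Finset.Icc (i + 1) (n - 1)).sup (fun j => ((-uexp j : ℝ) : EReal) + x (idx n hn j)) ⊔
    x (idx n hn n) ⊔ ((-uexp n : ℝ) : EReal)

lemma feas_iff (n : ℕ) (hn : 0 < n) (x : Fin n → EReal) :
    tcexFeas n hn x ↔
      (∀ i : ℕ, 1 ≤ i → i ≤ n - 1 → lhsS n hn i x ≤ rhsS n hn i x) ∧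
      (∀ j : Fin n, x j ≤ 0) ∧
      (∀ i : ℕ, 1 ≤ i → i ≤ n - 2 → x (idx n hn i) ≤ x (idx n hn (i + 1))) ∧
      (2 ≤ n → x (idx n hn (n - 1)) ≤ ((uexp n : ℝ) : EReal) + x (idx n hn n)) := by
  unfold tcexFeas lhsS rhsS
  simp only [Finset.sup_eq_iSup]

lemma strict_iff (n : ℕ) (hn : 0 < n) (x : Fin n → EReal) :
    tcexFeasStrict n hn x ↔
      (∀ i : ℕ, 1 ≤ i → i ≤ n - 1 → lhsS n hn i x < rhsS n hn i x) ∧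
      (∀ j : Fin n, x j < 0) ∧
      (∀ i : ℕ, 1 ≤ i → i ≤ n - 2 → x (idx n hn i) < x (idx n hn (i + 1))) ∧
      (2 ≤ n → x (idx n hn (n - 1)) < ((uexp n : ℝ) : EReal) + x (idx n hn n)) := by
  unfold tcexFeasStrict lhsS rhsS
  simp only [Finset.sup_eq_iSup]

lemma strict_imp_feas (n : ℕ) (hn : 0 < n) (x : Fin n → EReal)
    (h : tcexFeasStrict n hn x) : tcexFeas n hn x := by
  obtain ⟨a, b, c, d⟩ := h
  exact ⟨fun i h1 h2 => (a i h1 h2).le, fun j => (b j).le, fun i h1 h2 => (c i h1 h2).le,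
    fun h2 => (d h2).le⟩

lemma idx_val (n : ℕ) (hn : 0 < n) {j : ℕ} (h1 : 1 ≤ j) (h2 : j ≤ n) :
    (idx n hn j).val = j - 1 := Nat.mod_eq_of_lt (by omega)

lemma le_lhsS_of_mem (n : ℕ) (hn : 0 < n) {i j : ℕ} (hj : j ∈ Finset.Icc 1 (i - 1))
    (x : Fin n → EReal) : ((-uexp i : ℝ) : EReal) + x (idx n hn j) ≤ lhsS n hn i x :=
  le_sup_of_le_left (Finset.le_sup (f := fun j => ((-uexp i : ℝ) : EReal) + x (idx n hn j)) hj)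

lemma self_le_lhsS (n : ℕ) (hn : 0 < n) (i : ℕ) (x : Fin n → EReal) :
    ((-uexp (i + 1) + 1 : ℝ) : EReal) + x (idx n hn i) ≤ lhsS n hn i x := le_sup_right

lemma le_rhsS_of_mem (n : ℕ) (hn : 0 < n) {i j : ℕ} (hj : j ∈ Finset.Icc (i + 1) (n - 1))
    (x : Fin n → EReal) : ((-uexp j : ℝ) : EReal) + x (idx n hn j) ≤ rhsS n hn i x :=
  le_sup_of_le_left (le_sup_of_le_left
    (Finset.le_sup (f := fun j => ((-uexp j : ℝ) : EReal) + x (idx n hn j)) hj))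

lemma xn_le_rhsS (n : ℕ) (hn : 0 < n) (i : ℕ) (x : Fin n → EReal) :
    x (idx n hn n) ≤ rhsS n hn i x := le_sup_of_le_left le_sup_right

lemma coe_le_rhsS (n : ℕ) (hn : 0 < n) (i : ℕ) (x : Fin n → EReal) :
    ((-uexp n : ℝ) : EReal) ≤ rhsS n hn i x := le_sup_right

lemma lhsS_le_iff (n : ℕ) (hn : 0 < n) (i : ℕ) (x : Fin n → EReal) {b : EReal} :
    lhsS n hn i x ≤ b ↔
      (∀ j ∈ Finset.Icc 1 (i - 1), ((-uexp i : ℝ) : EReal) + x (idx n hn j) ≤ b) ∧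
      ((-uexp (i + 1) + 1 : ℝ) : EReal) + x (idx n hn i) ≤ b := by
  unfold lhsS; rw [sup_le_iff, Finset.sup_le_iff]

lemma lhsS_lt_iff (n : ℕ) (hn : 0 < n) (i : ℕ) (x : Fin n → EReal) {b : EReal} (hb : ⊥ < b) :
    lhsS n hn i x < b ↔
      (∀ j ∈ Finset.Icc 1 (i - 1), ((-uexp i : ℝ) : EReal) + x (idx n hn j) < b) ∧
      ((-uexp (i + 1) + 1 : ℝ) : EReal) + x (idx n hn i) < b := by
  unfold lhsS; rw [sup_lt_iff, Finset.sup_lt_iff hb]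

lemma rhsS_le_iff (n : ℕ) (hn : 0 < n) (i : ℕ) (x : Fin n → EReal) {b : EReal} :
    rhsS n hn i x ≤ b ↔
      (∀ j ∈ Finset.Icc (i + 1) (n - 1), ((-uexp j : ℝ) : EReal) + x (idx n hn j) ≤ b) ∧
      x (idx n hn n) ≤ b ∧ ((-uexp n : ℝ) : EReal) ≤ b := by
  unfold rhsS; rw [sup_le_iff, sup_le_iff, Finset.sup_le_iff, and_assoc]

lemma rhsS_mono (n : ℕ) (hn : 0 < n) (i : ℕ) (x y : Fin n → EReal) (h : ∀ j, x j ≤ y j) :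
    rhsS n hn i x ≤ rhsS n hn i y :=
  sup_le_sup (sup_le_sup (Finset.sup_mono_fun fun j _ => add_le_add le_rfl (h _)) (h _)) le_rfl

lemma exists_real_of {a : EReal} {c : ℝ} (hc : (c : EReal) ≤ a) (h : a ≠ ⊤) :
    ∃ r : ℝ, a = (r : EReal) ∧ c ≤ r := by
  induction a using EReal.rec with
  | bot => exact absurd hc (by simp)
  | coe r => exact ⟨r, rfl, by exact_mod_cast hc⟩
  | top => exact absurd rfl h

lemma rhsS_ne_top (n : ℕ) (hn : 0 < n) (i : ℕ) (x : Fin n → ℝ) :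
    rhsS n hn i (fun j => ((x j : ℝ) : EReal)) ≠ ⊤ := by
  unfold rhsS
  refine (sup_lt_iff.2 ⟨sup_lt_iff.2 ⟨?_, EReal.coe_lt_top _⟩, EReal.coe_lt_top _⟩).ne
  refine (Finset.sup_lt_iff bot_lt_top).2 fun j hj => ?_
  rw [← EReal.coe_add]; exact EReal.coe_lt_top _

lemma rhsS_real (n : ℕ) (hn : 0 < n) (i : ℕ) (x : Fin n → ℝ) :
    ∃ r : ℝ, rhsS n hn i (fun j => ((x j : ℝ) : EReal)) = (r : EReal) ∧ -uexp n ≤ r :=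
  exists_real_of (coe_le_rhsS n hn i _) (rhsS_ne_top n hn i x)

/-! ### The key perturbation lemma -/

lemma key (n : ℕ) (hn : 0 < n) (x : Fin n → ℝ)
    (hx : tcexFeas n hn (fun i => ((x i : ℝ) : EReal))) {ε : ℝ} (hε : 0 < ε) :
    tcexFeasStrict n hn (fun i => ((x i - ε * 2 ^ (n - 1 - i.val) : ℝ) : EReal)) := by
  rw [feas_iff] at hx
  rw [strict_iff]
  obtain ⟨hA, hB, hC, hD⟩ := hx
  refine ⟨?_, ?_, ?_, ?_⟩
  · -- main constraints
    intro i h1 h2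
    have hAi := hA i h1 h2
    obtain ⟨r, hr, hrge⟩ := rhsS_real n hn i x
    obtain ⟨s, hs, hsge⟩ := rhsS_real n hn i (fun j => x j - ε * 2 ^ (n - 1 - j.val))
    rw [hs]
    -- r ≤ s + ε * 2 ^ (n - 1 - i)
    have hrs : r ≤ s + ε * 2 ^ (n - 1 - i) := by
      rw [← EReal.coe_le_coe_iff, ← hr, rhsS_le_iff]
      refine ⟨fun j hj => ?_, ?_, ?_⟩
      · obtain ⟨hj1, hj2⟩ := Finset.mem_Icc.1 hj
        have hval : (idx n hn j).val = j - 1 := idx_val n hn (by omega) (by omega)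
        have hterm : ((-uexp j : ℝ) : EReal) +
            ((x (idx n hn j) - ε * 2 ^ (n - 1 - (idx n hn j).val) : ℝ) : EReal) ≤ (s : EReal) := by
          rw [← hs]
          exact le_rhsS_of_mem n hn hj (fun j => ((x j - ε * 2 ^ (n - 1 - j.val) : ℝ) : EReal))
        rw [← EReal.coe_add, EReal.coe_le_coe_iff] at hterm
        rw [hval] at hterm
        have hpow : ε * 2 ^ (n - 1 - (j - 1)) ≤ ε * 2 ^ (n - 1 - i) :=
          mul_le_mul_of_nonneg_left (pow_le_pow_right₀ one_le_two (by omega)) hε.le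
        exact_mod_cast (show -uexp j + x (idx n hn j) ≤ s + ε * 2 ^ (n - 1 - i) by linarith)
      · have hvaln : (idx n hn n).val = n - 1 := idx_val n hn (by omega) le_rfl
        have hterm : ((x (idx n hn n) - ε * 2 ^ (n - 1 - (idx n hn n).val) : ℝ) : EReal)
            ≤ (s : EReal) := by
          rw [← hs]
          exact xn_le_rhsS n hn i (fun j => ((x j - ε * 2 ^ (n - 1 - j.val) : ℝ) : EReal))
        rw [EReal.coe_le_coe_iff, hvaln, show n - 1 - (n - 1) = 0 from by omega, pow_zero,
          mul_one] at hterm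
        have h1' : (1 : ℝ) ≤ 2 ^ (n - 1 - i) := one_le_pow₀ one_le_two
        have h2' : ε * 1 ≤ ε * 2 ^ (n - 1 - i) := mul_le_mul_of_nonneg_left h1' hε.le
        exact_mod_cast (show x (idx n hn n) ≤ s + ε * 2 ^ (n - 1 - i) by linarith)
      · have hcpos : (0 : ℝ) ≤ ε * 2 ^ (n - 1 - i) := by positivity
        exact_mod_cast (show -uexp n ≤ s + ε * 2 ^ (n - 1 - i) by linarith)
    -- conclude strict inequality
    rw [lhsS_lt_iff n hn i _ (EReal.bot_lt_coe s)]
    refine ⟨fun j hj => ?_, ?_⟩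
    · obtain ⟨hj1, hj2⟩ := Finset.mem_Icc.1 hj
      have hval : (idx n hn j).val = j - 1 := idx_val n hn (by omega) (by omega)
      have hterm : ((-uexp i : ℝ) : EReal) + ((x (idx n hn j) : ℝ) : EReal) ≤ (r : EReal) := by
        rw [← hr]
        exact (le_lhsS_of_mem n hn hj (fun j => ((x j : ℝ) : EReal))).trans hAi
      rw [← EReal.coe_add, EReal.coe_le_coe_iff] at hterm
      have hpow : ε * 2 ^ (n - 1 - i) < ε * 2 ^ (n - 1 - (j - 1)) :=
        mul_lt_mul_of_pos_left (pow_lt_pow_right₀ one_lt_two (by omega)) hε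
      have hgoal : -uexp i + (x (idx n hn j) - ε * 2 ^ (n - 1 - (idx n hn j).val)) < s := by
        rw [hval]; linarith
      exact_mod_cast hgoal
    · have hvali : (idx n hn i).val = i - 1 := idx_val n hn h1 (by omega)
      have hterm : ((-uexp (i + 1) + 1 : ℝ) : EReal) + ((x (idx n hn i) : ℝ) : EReal)
          ≤ (r : EReal) := by
        rw [← hr]
        exact (self_le_lhsS n hn i (fun j => ((x j : ℝ) : EReal))).trans hAi
      rw [← EReal.coe_add, EReal.coe_le_coe_iff] at hterm
      have hpow : ε * 2 ^ (n - 1 - i) < ε * 2 ^ (n - 1 - (i - 1)) :=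
        mul_lt_mul_of_pos_left (pow_lt_pow_right₀ one_lt_two (by omega)) hε
      have hgoal : -uexp (i + 1) + 1 + (x (idx n hn i) - ε * 2 ^ (n - 1 - (idx n hn i).val)) < s := by
        rw [hvali]; linarith
      exact_mod_cast hgoal
  · -- nonpositivity
    intro j
    have hb : x j ≤ 0 := by exact_mod_cast hB j
    have hp : (0 : ℝ) < ε * 2 ^ (n - 1 - j.val) := by positivity
    exact_mod_cast (show x j - ε * 2 ^ (n - 1 - j.val) < 0 by linarith)
  · -- monotonicity
    intro i h1 h2
    have h1n : (idx n hn i).val = i - 1 := idx_val n hn h1 (by omega)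
    have h2n : (idx n hn (i + 1)).val = i := idx_val n hn (by omega) (by omega)
    have hc : x (idx n hn i) ≤ x (idx n hn (i + 1)) := by exact_mod_cast hC i h1 h2
    have hpow : ε * 2 ^ (n - 1 - i) < ε * 2 ^ (n - 1 - (i - 1)) :=
      mul_lt_mul_of_pos_left (pow_lt_pow_right₀ one_lt_two (by omega)) hε
    have hgoal : x (idx n hn i) - ε * 2 ^ (n - 1 - (idx n hn i).val) <
        x (idx n hn (i + 1)) - ε * 2 ^ (n - 1 - (idx n hn (i + 1)).val) := by
      rw [h1n, h2n]; linarith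
    exact_mod_cast hgoal
  · -- last constraint
    intro h2n
    have ha : (idx n hn (n - 1)).val = n - 1 - 1 := idx_val n hn (by omega) (by omega)
    have hb' : (idx n hn n).val = n - 1 := idx_val n hn (by omega) le_rfl
    have hd : x (idx n hn (n - 1)) ≤ uexp n + x (idx n hn n) := by
      have := hD h2n
      rw [← EReal.coe_add] at this
      exact_mod_cast this
    have hgoal : x (idx n hn (n - 1)) - ε * 2 ^ (n - 1 - (idx n hn (n - 1)).val) <
        uexp n + (x (idx n hn n) - ε * 2 ^ (n - 1 - (idx n hn n).val)) := by
      rw [ha, hb', show n - 1 - (n - 1 - 1) = 1 from by omega,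
        show n - 1 - (n - 1) = 0 from by omega, pow_one, pow_zero, mul_one]
      linarith
    rw [← EReal.coe_add]
    exact_mod_cast hgoal

/-! ### Topological lemmas -/

lemma ereal_cont_const_add (c : ℝ) : Continuous fun y : EReal => (c : EReal) + y := by
  rw [continuous_iff_continuousAt]
  intro a
  exact (EReal.continuousAt_add (Or.inl (EReal.coe_ne_top c)) (Or.inl (EReal.coe_ne_bot c))).comp
    ((continuous_const.prodMk continuous_id).continuousAt)

lemma cont_finsup {n : ℕ} (s : Finset ℕ) (f : ℕ → (Fin n → EReal) → EReal)
    (hf : ∀ j, Continuous (f j)) : Continuous fun x => s.sup fun j => f j x := by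
  classical
  induction s using Finset.induction_on with
  | empty => simpa using continuous_const
  | insert _ _ h ih => simp only [Finset.sup_insert]; exact (hf _).sup ih

lemma cont_lhsS (n : ℕ) (hn : 0 < n) (i : ℕ) : Continuous (lhsS n hn i) := by
  unfold lhsS
  exact Continuous.sup
    (cont_finsup _ _ fun j => (ereal_cont_const_add _).comp (continuous_apply _))
    ((ereal_cont_const_add _).comp (continuous_apply _))

lemma cont_rhsS (n : ℕ) (hn : 0 < n) (i : ℕ) : Continuous (rhsS n hn i) := by
  unfold rhsS
  exact Continuous.sup (Continuous.sup
    (cont_finsup _ _ fun j => (ereal_cont_const_add _).comp (continuous_apply _))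
    (continuous_apply _)) continuous_const

lemma feas_closed (n : ℕ) (hn : 0 < n) : IsClosed {x : Fin n → EReal | tcexFeas n hn x} := by
  have hset : {x : Fin n → EReal | tcexFeas n hn x} =
      (⋂ i, ⋂ (_ : 1 ≤ i), ⋂ (_ : i ≤ n - 1), {x | lhsS n hn i x ≤ rhsS n hn i x}) ∩
      ((⋂ j : Fin n, {x | x j ≤ 0}) ∩
      ((⋂ i, ⋂ (_ : 1 ≤ i), ⋂ (_ : i ≤ n - 2), {x | x (idx n hn i) ≤ x (idx n hn (i + 1))}) ∩
      (⋂ (_ : 2 ≤ n), {x | x (idx n hn (n - 1)) ≤ ((uexp n : ℝ) : EReal) + x (idx n hn n)}))) := by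
    ext x
    simp only [Set.mem_setOf_eq, Set.mem_inter_iff, Set.mem_iInter, feas_iff]
  rw [hset]
  refine IsClosed.inter ?_ (IsClosed.inter ?_ (IsClosed.inter ?_ ?_))
  · exact isClosed_iInter fun i => isClosed_iInter fun _ => isClosed_iInter fun _ =>
      isClosed_le (cont_lhsS n hn i) (cont_rhsS n hn i)
  · exact isClosed_iInter fun j => isClosed_le (continuous_apply j) continuous_const
  · exact isClosed_iInter fun i => isClosed_iInter fun _ => isClosed_iInter fun _ =>
      isClosed_le (continuous_apply _) (continuous_apply _)
  · exact isClosed_iInter fun _ =>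
      isClosed_le (continuous_apply _) ((ereal_cont_const_add _).comp (continuous_apply _))

lemma strict_open (n : ℕ) (hn : 0 < n) : IsOpen {x : Fin n → EReal | tcexFeasStrict n hn x} := by
  have hset : {x : Fin n → EReal | tcexFeasStrict n hn x} =
      (⋂ i ∈ Finset.Icc 1 (n - 1), {x : Fin n → EReal | lhsS n hn i x < rhsS n hn i x}) ∩
      ((⋂ j : Fin n, {x | x j < 0}) ∩
      ((⋂ i ∈ Finset.Icc 1 (n - 2), {x | x (idx n hn i) < x (idx n hn (i + 1))}) ∩
      (⋂ (_ : 2 ≤ n), {x | x (idx n hn (n - 1)) < ((uexp n : ℝ) : EReal) + x (idx n hn n)}))) := by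
    ext x
    simp only [Set.mem_setOf_eq, Set.mem_inter_iff, Set.mem_iInter, strict_iff,
      Finset.mem_Icc, and_imp]
  rw [hset]
  refine IsOpen.inter ?_ (IsOpen.inter ?_ (IsOpen.inter ?_ ?_))
  · exact isOpen_biInter_finset fun i _ => isOpen_lt (cont_lhsS n hn i) (cont_rhsS n hn i)
  · exact isOpen_iInter_of_finite fun j => isOpen_lt (continuous_apply j) continuous_const
  · exact isOpen_biInter_finset fun i _ => isOpen_lt (continuous_apply _) (continuous_apply _)
  · exact isOpen_iInter_of_finite fun _ =>
      isOpen_lt (continuous_apply _) ((ereal_cont_const_add _).comp (continuous_apply _))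

/-! ### Truncation of `-∞` coordinates -/

noncomputable def truncR (n : ℕ) (x : Fin n → EReal) (t : ℝ) (j : Fin n) : ℝ :=
  if x j = ⊥ then -t else (x j).toReal

lemma uexp_nonneg {n : ℕ} (hn2 : 2 ≤ n) : 0 ≤ uexp n := by
  unfold uexp
  have h0 : (0 : ℝ) ≤ (n : ℝ) - 2 := by
    have : (2 : ℝ) ≤ (n : ℝ) := by exact_mod_cast hn2
    linarith
  have h1 : (1 : ℝ) ≤ (2 : ℝ) ^ ((n : ℝ) - 2) := by
    rw [show (1 : ℝ) = (2 : ℝ) ^ (0 : ℝ) from (Real.rpow_zero 2).symm]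
    exact (Real.rpow_le_rpow_left_iff one_lt_two).2 h0
  linarith

lemma trunc_feas (n : ℕ) (hn : 0 < n) (x : Fin n → EReal) (hx : tcexFeas n hn x) :
    ∀ᶠ t : ℝ in atTop, tcexFeas n hn (fun j => ((truncR n x t j : ℝ) : EReal)) := by
  obtain ⟨hA, hB, hC, hD⟩ := (feas_iff n hn x).1 hx
  have hxtop : ∀ j, x j ≠ ⊤ := fun j => ne_top_of_le_ne_top (by simp) (hB j)
  have hcoe : ∀ j, x j ≠ ⊥ → (((x j).toReal : ℝ) : EReal) = x j := fun j h =>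
    EReal.coe_toReal (hxtop j) h
  have hmono : ∀ (t : ℝ) (j : Fin n), x j ≤ ((truncR n x t j : ℝ) : EReal) := by
    intro t j
    unfold truncR
    by_cases h : x j = ⊥
    · rw [if_pos h, h]; exact bot_le
    · rw [if_neg h, hcoe j h]
  -- main constraints
  have hAev : ∀ᶠ t : ℝ in atTop, ∀ i ∈ Finset.Icc 1 (n - 1),
      lhsS n hn i (fun j => ((truncR n x t j : ℝ) : EReal)) ≤
        rhsS n hn i (fun j => ((truncR n x t j : ℝ) : EReal)) := by
    rw [Filter.eventually_all_finset]
    intro i hi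
    obtain ⟨h1, h2⟩ := Finset.mem_Icc.1 hi
    have hAi := hA i h1 h2
    have hRmono : ∀ t : ℝ, rhsS n hn i x ≤ rhsS n hn i (fun j => ((truncR n x t j : ℝ) : EReal)) :=
      fun t => rhsS_mono n hn i _ _ (hmono t)
    have hterm : ∀ (c : ℝ) (k : ℕ), ((c : ℝ) : EReal) + x (idx n hn k) ≤ lhsS n hn i x →
        ∀ᶠ t : ℝ in atTop, ((c : ℝ) : EReal) + ((truncR n x t (idx n hn k) : ℝ) : EReal) ≤
          rhsS n hn i (fun j => ((truncR n x t j : ℝ) : EReal)) := by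
      intro c k hk
      by_cases hb : x (idx n hn k) = ⊥
      · filter_upwards [eventually_ge_atTop (c + uexp n)] with t ht
        have heq : ((c : ℝ) : EReal) + ((truncR n x t (idx n hn k) : ℝ) : EReal)
            = ((c + -t : ℝ) : EReal) := by
          unfold truncR; rw [if_pos hb, ← EReal.coe_add]
        rw [heq]
        refine le_trans ?_ (coe_le_rhsS n hn i _)
        exact_mod_cast (show c + -t ≤ -uexp n by linarith)
      · refine Filter.Eventually.of_forall fun t => ?_
        have heq : ((truncR n x t (idx n hn k) : ℝ) : EReal) = x (idx n hn k) := by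
          unfold truncR; rw [if_neg hb, hcoe _ hb]
        rw [heq]
        exact le_trans (le_trans hk hAi) (hRmono t)
    have hsup := (Filter.eventually_all_finset (Finset.Icc 1 (i - 1))).2
      (fun j hj => hterm (-uexp i) j (le_lhsS_of_mem n hn hj x))
    have hself := hterm (-uexp (i + 1) + 1) i (self_le_lhsS n hn i x)
    filter_upwards [hsup, hself] with t ht1 ht2
    exact (lhsS_le_iff n hn i _).2 ⟨ht1, ht2⟩
  -- nonpositivity
  have hBev : ∀ᶠ t : ℝ in atTop, ∀ j : Fin n, ((truncR n x t j : ℝ) : EReal) ≤ 0 := by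
    rw [Filter.eventually_all]
    intro j
    by_cases hb : x j = ⊥
    · filter_upwards [eventually_ge_atTop (0 : ℝ)] with t ht
      unfold truncR; rw [if_pos hb]
      exact_mod_cast (show -t ≤ (0 : ℝ) by linarith)
    · refine Filter.Eventually.of_forall fun t => ?_
      unfold truncR; rw [if_neg hb, hcoe _ hb]
      exact hB j
  -- monotonicity
  have hCev : ∀ᶠ t : ℝ in atTop, ∀ i ∈ Finset.Icc 1 (n - 2),
      ((truncR n x t (idx n hn i) : ℝ) : EReal) ≤ ((truncR n x t (idx n hn (i + 1)) : ℝ) : EReal) := by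
    rw [Filter.eventually_all_finset]
    intro i hi
    obtain ⟨h1, h2⟩ := Finset.mem_Icc.1 hi
    have hCi := hC i h1 h2
    by_cases hb : x (idx n hn (i + 1)) = ⊥
    · have hb' : x (idx n hn i) = ⊥ := le_bot_iff.1 (hb ▸ hCi)
      refine Filter.Eventually.of_forall fun t => ?_
      unfold truncR; rw [if_pos hb, if_pos hb']
    · by_cases hb' : x (idx n hn i) = ⊥
      · filter_upwards [eventually_ge_atTop (-(x (idx n hn (i + 1))).toReal)] with t ht
        unfold truncR; rw [if_pos hb', if_neg hb]
        exact_mod_cast (show -t ≤ (x (idx n hn (i + 1))).toReal by linarith)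
      · refine Filter.Eventually.of_forall fun t => ?_
        unfold truncR; rw [if_neg hb, if_neg hb', hcoe _ hb', hcoe _ hb]
        exact hCi
  -- last constraint
  have hDev : ∀ᶠ t : ℝ in atTop, 2 ≤ n →
      ((truncR n x t (idx n hn (n - 1)) : ℝ) : EReal) ≤
        ((uexp n : ℝ) : EReal) + ((truncR n x t (idx n hn n) : ℝ) : EReal) := by
    by_cases hn2 : 2 ≤ n
    · have hDi := hD hn2
      have hu : 0 ≤ uexp n := uexp_nonneg hn2
      by_cases hb : x (idx n hn n) = ⊥
      · have hb' : x (idx n hn (n - 1)) = ⊥ := by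
          apply le_bot_iff.1
          have h5 := hDi
          rw [hb, EReal.add_bot] at h5
          exact h5
        refine Filter.Eventually.of_forall fun t _ => ?_
        unfold truncR; rw [if_pos hb, if_pos hb', ← EReal.coe_add]
        exact_mod_cast (show -t ≤ uexp n + -t by linarith)
      · by_cases hb' : x (idx n hn (n - 1)) = ⊥
        · filter_upwards [eventually_ge_atTop (-(uexp n + (x (idx n hn n)).toReal))] with t ht _
          unfold truncR; rw [if_pos hb', if_neg hb, ← EReal.coe_add]
          exact_mod_cast (show -t ≤ uexp n + (x (idx n hn n)).toReal by linarith)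
        · refine Filter.Eventually.of_forall fun t _ => ?_
          unfold truncR; rw [if_neg hb, if_neg hb', hcoe _ hb', hcoe _ hb]
          exact hDi
    · exact Filter.Eventually.of_forall fun t h => absurd h hn2
  filter_upwards [hAev, hBev, hCev, hDev] with t h1 h2 h3 h4
  rw [feas_iff]
  exact ⟨fun i hi1 hi2 => h1 i (Finset.mem_Icc.2 ⟨hi1, hi2⟩), h2,
    fun i hi1 hi2 => h3 i (Finset.mem_Icc.2 ⟨hi1, hi2⟩), h4⟩

/-- the feasible set `P` of `tcex_n` is regular (it equals the closure of
its interior in `(EReal)ⁿ`), and for every real point `x ∈ P` and `ε > 0`, the point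
`x − ε·(2^{n−1}, …, 2, 1)` satisfies all defining inequalities strictly. -/
theorem stmt17 (n : ℕ) (hn : 0 < n) :
    closure (interior {x : Fin n → EReal | tcexFeas n hn x}) =
      {x : Fin n → EReal | tcexFeas n hn x} ∧
    ∀ x : Fin n → ℝ, tcexFeas n hn (fun i => ((x i : ℝ) : EReal)) →
      ∀ ε : ℝ, 0 < ε →
        tcexFeasStrict n hn
          (fun i => ((x i - ε * 2 ^ (n - 1 - i.val) : ℝ) : EReal)) := by
  constructor
  · refine Set.Subset.antisymm ?_ ?_
    · exact closure_minimal interior_subset (feas_closed n hn)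
    · intro x hx
      have hx' : tcexFeas n hn x := hx
      obtain ⟨_, hB, _, _⟩ := (feas_iff n hn x).1 hx'
      have hxtop : ∀ j, x j ≠ ⊤ := fun j => ne_top_of_le_ne_top (by simp) (hB j)
      have hev := trunc_feas n hn x hx'
      have hstrict : ∀ᶠ t : ℝ in atTop, tcexFeasStrict n hn
          (fun j => ((truncR n x t j - t⁻¹ * 2 ^ (n - 1 - j.val) : ℝ) : EReal)) := by
        filter_upwards [hev, eventually_ge_atTop (1 : ℝ)] with t ht h1
        exact key n hn (truncR n x t) ht (inv_pos.2 (by linarith))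
      have hsub : {y : Fin n → EReal | tcexFeasStrict n hn y} ⊆
          interior {y : Fin n → EReal | tcexFeas n hn y} :=
        interior_maximal (fun y hy => strict_imp_feas n hn y hy) (strict_open n hn)
      have htend : Filter.Tendsto (fun t : ℝ => fun j : Fin n =>
          ((truncR n x t j - t⁻¹ * 2 ^ (n - 1 - j.val) : ℝ) : EReal)) atTop (𝓝 x) := by
        rw [tendsto_pi_nhds]
        intro j
        by_cases hb : x j = ⊥
        · rw [hb, EReal.tendsto_nhds_bot_iff_real]
          intro z
          filter_upwards [eventually_ge_atTop (1 : ℝ), eventually_gt_atTop (-z)] with t h1 h2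
          have h4 : (0 : ℝ) ≤ t⁻¹ * 2 ^ (n - 1 - j.val) := by positivity
          have h5 : truncR n x t j = -t := if_pos hb
          have hgoal : truncR n x t j - t⁻¹ * 2 ^ (n - 1 - j.val) < z := by
            rw [h5]; linarith
          exact_mod_cast hgoal
        · have hxj : x j = (((x j).toReal : ℝ) : EReal) := (EReal.coe_toReal (hxtop j) hb).symm
          have hreal : Filter.Tendsto (fun t : ℝ => ((x j).toReal - t⁻¹ * 2 ^ (n - 1 - j.val) : ℝ))
              atTop (𝓝 ((x j).toReal)) := by
            simpa using ((tendsto_inv_atTop_zero.mul_const ((2 : ℝ) ^ (n - 1 - j.val))).const_sub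
              ((x j).toReal))
          have h5 := (continuous_coe_real_ereal.tendsto ((x j).toReal)).comp hreal
          rw [hxj]
          have heq : (fun t : ℝ => ((truncR n x t j - t⁻¹ * 2 ^ (n - 1 - j.val) : ℝ) : EReal)) =
              fun t : ℝ => (((x j).toReal - t⁻¹ * 2 ^ (n - 1 - j.val) : ℝ) : EReal) := by
            funext t
            unfold truncR
            rw [if_neg hb]
          have hfun : (fun t : ℝ => (fun j => ((truncR n x t j - t⁻¹ * 2 ^ (n - 1 - j.val) : ℝ) :
              EReal)) j) = fun t : ℝ => ((truncR n x t j - t⁻¹ * 2 ^ (n - 1 - j.val) : ℝ) : EReal) :=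
            rfl
          rw [hfun, heq]
          exact h5
      exact mem_closure_of_tendsto htend (hstrict.mono fun t ht => hsub ht)
  · intro x hx ε hε
    exact key n hn x hx hε
end
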